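/- arXiv:1103.0741 — 7 statements merged into one kernel-verified Lean document; each statement's English description precedes it below -/
import Mathlib

section
/- Let λ ≥ 1 and R > 0, and set α = 1/(2λ). Let p_1, …, p_n be points of the square [0,√n]², and partition the square into m × m congruent square cells with m = ⌈√(5n)/R⌉. Assume that every cell contains at least R²/λ and at most λR² of the points. Let G be the graph on [n] with an edge {i,j} (i ≠ j) whenever d(p_i, p_j) ≤ R, where d is the Euclidean distance. Then G is an (h, αR²/h)-expander for every h with 1 ≤ h ≤ αR². -/
open Finset MeasureTheory

noncomputable section

/-- Out-neighborhood `N_G(I)` of a set of nodes `I`. -/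
def nbhd {n : ℕ} (G : SimpleGraph (Fin n)) (I : Finset (Fin n)) : Finset (Fin n) := by
  classical exact Finset.univ.filter (fun v => v ∉ I ∧ ∃ u ∈ I, G.Adj u v)

/-- The informed sets of the flooding process on the graph sequence `Gs` with source `s`. -/
def informed {n : ℕ} (Gs : ℕ → SimpleGraph (Fin n)) (s : Fin n) : ℕ → Finset (Fin n)
  | 0 => {s}
  | t + 1 => informed Gs s t ∪ nbhd (Gs t) (informed Gs s t)

/-- `G` is an `(h,k)`-expander: every nonempty set of at most `h` nodes has
out-neighborhood of size at least `k` times its size. -/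
def IsExpander {n : ℕ} (G : SimpleGraph (Fin n)) (h k : ℝ) : Prop :=
  ∀ I : Finset (Fin n), I.Nonempty → (I.card : ℝ) ≤ h →
    k * (I.card : ℝ) ≤ ((nbhd G I).card : ℝ)

/-- Euclidean distance in the plane. -/
def euclDist (x y : ℝ × ℝ) : ℝ := Real.sqrt ((x.1 - y.1) ^ 2 + (x.2 - y.2) ^ 2)

/-- The grid `L_{n,ε}` of points `(iε, jε)`, `i, j ∈ ℕ`, `i, j ≤ √n/ε`. -/
def grid (n : ℕ) (ε : ℝ) : Finset (ℝ × ℝ) :=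
  (Finset.range (⌊Real.sqrt n / ε⌋₊ + 1) ×ˢ Finset.range (⌊Real.sqrt n / ε⌋₊ + 1)).image
    (fun q => ((q.1 : ℝ) * ε, (q.2 : ℝ) * ε))

/-- `Γ(x)`: grid points within (move) radius `r` of `x`. -/
def gamma (n : ℕ) (ε r : ℝ) (x : ℝ × ℝ) : Finset (ℝ × ℝ) := by
  classical exact (grid n ε).filter (fun y => euclDist x y ≤ r)

/-- The stationary distribution `π(x) = |Γ(x)| / Σ_y |Γ(y)|` of node positions. -/
def statDist (n : ℕ) (ε r : ℝ) (x : ℝ × ℝ) : ℝ :=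
  if x ∈ grid n ε then
    ((gamma n ε r x).card : ℝ) / (∑ y ∈ grid n ε, ((gamma n ε r y).card : ℝ))
  else 0

/-- The `n` random positions `P` are independent, each distributed according to `π`. -/
def IsIIDStationary (n : ℕ) (ε r : ℝ) {Ω : Type} [MeasurableSpace Ω] (μ : Measure Ω)
    (P : Ω → Fin n → ℝ × ℝ) : Prop :=
  ∀ f : Fin n → ℝ × ℝ, μ {ω | P ω = f} = ENNReal.ofReal (∏ i, statDist n ε r (f i))

/-- Number of cells per side: `m = ⌈√(5n)/R⌉`. -/
def numCells (n : ℕ) (R : ℝ) : ℕ := ⌈Real.sqrt (5 * n) / R⌉₊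

/-- Side length of a cell. -/
def cellLen (n : ℕ) (R : ℝ) : ℝ := Real.sqrt n / (numCells n R : ℝ)

/-- Membership of a point `x` in cell `(i,j)` of the `m × m` partition of the square
`[0,√n]²` (cells are half-open, except that the last row/column is closed above,
points of the square being below `√n` anyway). -/
def inCell (n : ℕ) (R : ℝ) (i j : ℕ) (x : ℝ × ℝ) : Prop :=
  ((i : ℝ) * cellLen n R ≤ x.1 ∧ (x.1 < ((i : ℝ) + 1) * cellLen n R ∨ i + 1 = numCells n R)) ∧
  ((j : ℝ) * cellLen n R ≤ x.2 ∧ (x.2 < ((j : ℝ) + 1) * cellLen n R ∨ j + 1 = numCells n R))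

/-- The number of nodes whose positions (given by `p`) lie in cell `(i,j)`. -/
def cellCount (n : ℕ) (R : ℝ) (p : Fin n → ℝ × ℝ) (i j : ℕ) : ℕ := by
  classical exact (Finset.univ.filter fun v => inCell n R i j (p v)).card

/-- The geometric graph: an edge between distinct `u, v` iff their positions are at
Euclidean distance at most `R`. -/
def geoGraph (n : ℕ) (R : ℝ) (p : Fin n → ℝ × ℝ) : SimpleGraph (Fin n) :=
  SimpleGraph.fromRel (fun u v => euclDist (p u) (p v) ≤ R)

/-- `x` lies in the square `[0,√n]²`. -/
def inSquare (n : ℕ) (x : ℝ × ℝ) : Prop :=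
  0 ≤ x.1 ∧ x.1 ≤ Real.sqrt n ∧ 0 ≤ x.2 ∧ x.2 ≤ Real.sqrt n

/-- The random graph `G` is distributed as the Erdős–Rényi graph `G_{n,p}`. -/
def IsErdosRenyi {n : ℕ} {Ω : Type} [MeasurableSpace Ω] (μ : Measure Ω)
    (G : Ω → SimpleGraph (Fin n)) (p : ℝ) : Prop :=
  ∀ H : SimpleGraph (Fin n),
    μ {ω | G ω = H} =
      ENNReal.ofReal (p ^ (Nat.card H.edgeSet) * (1 - p) ^ (n.choose 2 - Nat.card H.edgeSet))


lemma my_numCells_pos (n : ℕ) (R : ℝ) (hR : 0 < R) (hn : 0 < n) : 0 < numCells n R := by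
  have hn' : (0:ℝ) < n := by exact_mod_cast hn
  exact Nat.ceil_pos.2 (div_pos (Real.sqrt_pos.2 (by linarith)) hR)

lemma my_cellLen_pos (n : ℕ) (R : ℝ) (hR : 0 < R) (hn : 0 < n) : 0 < cellLen n R := by
  have hn' : (0:ℝ) < n := by exact_mod_cast hn
  have hm : (0:ℝ) < (numCells n R : ℝ) := by exact_mod_cast my_numCells_pos n R hR hn
  exact div_pos (Real.sqrt_pos.2 hn') hm

lemma my_mul_cellLen (n : ℕ) (R : ℝ) (hR : 0 < R) (hn : 0 < n) :
    (numCells n R : ℝ) * cellLen n R = Real.sqrt n := by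
  have hm : (0:ℝ) < (numCells n R : ℝ) := by exact_mod_cast my_numCells_pos n R hR hn
  unfold cellLen
  field_simp

lemma my_sqrt5_cellLen (n : ℕ) (R : ℝ) (hR : 0 < R) (hn : 0 < n) :
    Real.sqrt 5 * cellLen n R ≤ R := by
  have hm : (0:ℝ) < (numCells n R : ℝ) := by exact_mod_cast my_numCells_pos n R hR hn
  have hle : Real.sqrt (5 * n) / R ≤ (numCells n R : ℝ) := Nat.le_ceil _
  have h5n : Real.sqrt (5 * n) = Real.sqrt 5 * Real.sqrt n :=
    Real.sqrt_mul (by norm_num) _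
  have h1 : Real.sqrt (5 * n) ≤ (numCells n R : ℝ) * R := by
    rw [div_le_iff₀ hR] at hle; exact hle
  unfold cellLen
  rw [mul_div_assoc', ← h5n, div_le_iff₀ hm]
  linarith [h1]

lemma my_oned (n : ℕ) (R : ℝ) (hR : 0 < R) (hn : 0 < n) (x : ℝ) (hx0 : 0 ≤ x)
    (hx1 : x ≤ Real.sqrt n) :
    ∃ i, i < numCells n R ∧ (i : ℝ) * cellLen n R ≤ x ∧
      (x < ((i : ℝ) + 1) * cellLen n R ∨ i + 1 = numCells n R) := by
  have hℓ : 0 < cellLen n R := my_cellLen_pos n R hR hn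
  have hm : 0 < numCells n R := my_numCells_pos n R hR hn
  by_cases hc : ⌊x / cellLen n R⌋₊ < numCells n R
  · refine ⟨⌊x / cellLen n R⌋₊, hc, ?_, Or.inl ?_⟩
    · rw [← le_div_iff₀ hℓ]
      exact Nat.floor_le (div_nonneg hx0 hℓ.le)
    · rw [← div_lt_iff₀ hℓ]
      exact Nat.lt_floor_add_one _
  · refine ⟨numCells n R - 1, Nat.sub_lt hm one_pos, ?_, Or.inr (Nat.succ_pred_eq_of_pos hm)⟩
    have hcast : ((numCells n R - 1 : ℕ) : ℝ) = (numCells n R : ℝ) - 1 := by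
      rw [Nat.cast_sub hm]; norm_num
    have : ((numCells n R : ℝ) - 1) * cellLen n R ≤ Real.sqrt n := by
      rw [← my_mul_cellLen n R hR hn]; nlinarith [hℓ]
    -- we also know x ≥ numCells * cellLen = √n
    push_neg at hc
    have h1 : (numCells n R : ℝ) ≤ x / cellLen n R := by
      calc (numCells n R : ℝ) ≤ (⌊x / cellLen n R⌋₊ : ℝ) := by exact_mod_cast hc
        _ ≤ x / cellLen n R := Nat.floor_le (div_nonneg hx0 hℓ.le)
    have h2 : Real.sqrt n ≤ x := by
      rw [← my_mul_cellLen n R hR hn]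
      rw [le_div_iff₀ hℓ] at h1; linarith
    rw [hcast]; linarith

lemma my_oned_upper (n : ℕ) (R : ℝ) (hR : 0 < R) (hn : 0 < n) (i : ℕ) (x : ℝ)
    (hlow : (i : ℝ) * cellLen n R ≤ x)
    (hup : x < ((i : ℝ) + 1) * cellLen n R ∨ i + 1 = numCells n R)
    (hx : x ≤ Real.sqrt n) : x ≤ ((i : ℝ) + 1) * cellLen n R := by
  rcases hup with h | h
  · exact h.le
  · have : ((i : ℝ) + 1) = (numCells n R : ℝ) := by exact_mod_cast congrArg Nat.cast h
    rw [this, my_mul_cellLen n R hR hn]; exact hx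

lemma my_cell_dist (n : ℕ) (R : ℝ) (hR : 0 < R) (hn : 0 < n) (i j : ℕ) (x y : ℝ × ℝ)
    (hx : inCell n R i j x) (hy : inCell n R i j y)
    (hxs : inSquare n x) (hys : inSquare n y) : euclDist x y ≤ R := by
  have hℓ : 0 < cellLen n R := my_cellLen_pos n R hR hn
  have hx1 := my_oned_upper n R hR hn i x.1 hx.1.1 hx.1.2 hxs.2.1
  have hy1 := my_oned_upper n R hR hn i y.1 hy.1.1 hy.1.2 hys.2.1
  have hx2 := my_oned_upper n R hR hn j x.2 hx.2.1 hx.2.2 hxs.2.2.2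
  have hy2 := my_oned_upper n R hR hn j y.2 hy.2.1 hy.2.2 hys.2.2.2
  have hd1 : (x.1 - y.1) ^ 2 ≤ cellLen n R ^ 2 := by
    have l1 := hx.1.1; have l2 := hy.1.1; nlinarith
  have hd2 : (x.2 - y.2) ^ 2 ≤ cellLen n R ^ 2 := by
    have l1 := hx.2.1; have l2 := hy.2.1; nlinarith
  have h5 : Real.sqrt 5 ^ 2 = 5 := Real.sq_sqrt (by norm_num)
  have hsq5 := my_sqrt5_cellLen n R hR hn
  have h5l : 5 * cellLen n R ^ 2 ≤ R ^ 2 := by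
    nlinarith [mul_le_mul hsq5 hsq5 (by positivity : (0:ℝ) ≤ Real.sqrt 5 * cellLen n R) hR.le]
  have hsum : (x.1 - y.1) ^ 2 + (x.2 - y.2) ^ 2 ≤ R ^ 2 := by nlinarith [sq_nonneg (cellLen n R)]
  calc euclDist x y = Real.sqrt ((x.1 - y.1) ^ 2 + (x.2 - y.2) ^ 2) := rfl
    _ ≤ Real.sqrt (R ^ 2) := Real.sqrt_le_sqrt hsum
    _ = R := Real.sqrt_sq hR.le

/-- expansion of the geometric graph for small sets. -/
theorem geo_expander_small (n : ℕ) (lam R : ℝ) (hlam : 1 ≤ lam) (hR : 0 < R)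
    (p : Fin n → ℝ × ℝ) (hsq : ∀ v, inSquare n (p v))
    (hcell : ∀ i j : ℕ, i < numCells n R → j < numCells n R →
      R ^ 2 / lam ≤ (cellCount n R p i j : ℝ) ∧ (cellCount n R p i j : ℝ) ≤ lam * R ^ 2)
    (h : ℝ) (h1 : 1 ≤ h) (h2 : h ≤ (1 / (2 * lam)) * R ^ 2) :
    IsExpander (geoGraph n R p) h ((1 / (2 * lam)) * R ^ 2 / h) := by
  classical
  intro I hI hIh
  obtain ⟨u, hu⟩ := hI
  have hn : 0 < n := u.pos
  obtain ⟨i, hi, hi1, hi2⟩ := my_oned n R hR hn (p u).1 (hsq u).1 (hsq u).2.1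
  obtain ⟨j, hj, hj1, hj2⟩ := my_oned n R hR hn (p u).2 (hsq u).2.2.1 (hsq u).2.2.2
  have hcellu : inCell n R i j (p u) := ⟨⟨hi1, hi2⟩, ⟨hj1, hj2⟩⟩
  set S : Finset (Fin n) := Finset.univ.filter (fun v => inCell n R i j (p v)) with hS
  have hScard : R ^ 2 / lam ≤ (S.card : ℝ) := (hcell i j hi hj).1
  set N := nbhd (geoGraph n R p) I with hN
  have hsub : S ⊆ I ∪ N := by
    intro v hv
    simp only [hS, mem_filter, mem_univ, true_and] at hv
    by_cases hvI : v ∈ I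
    · exact mem_union_left _ hvI
    · refine mem_union_right _ ?_
      simp only [hN, nbhd, mem_filter, mem_univ, true_and]
      refine ⟨hvI, u, hu, ?_⟩
      have hne : u ≠ v := fun hh => hvI (hh ▸ hu)
      exact ⟨hne, Or.inl (my_cell_dist n R hR hn i j _ _ hcellu hv (hsq u) (hsq v))⟩
  have hcards : (S.card : ℝ) ≤ (I.card : ℝ) + (N.card : ℝ) := by
    have h1 : S.card ≤ (I ∪ N).card := Finset.card_le_card hsub
    have h2 : (I ∪ N).card ≤ I.card + N.card := Finset.card_union_le _ _
    exact_mod_cast h1.trans h2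
  have hlam0 : (0:ℝ) < lam := by linarith
  have hAeq : R ^ 2 / lam = 2 * ((1 / (2 * lam)) * R ^ 2) := by
    field_simp
  have hh0 : (0:ℝ) < h := by linarith
  have hA0 : (0:ℝ) ≤ (1 / (2 * lam)) * R ^ 2 := by positivity
  have hImem : (1:ℝ) ≤ (I.card : ℝ) := by
    have : 1 ≤ I.card := Finset.card_pos.2 ⟨u, hu⟩
    exact_mod_cast this
  have hNA : (1 / (2 * lam)) * R ^ 2 ≤ (N.card : ℝ) := by linarith
  calc (1 / (2 * lam)) * R ^ 2 / h * (I.card : ℝ)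
      ≤ (1 / (2 * lam)) * R ^ 2 / h * h := by
        apply mul_le_mul_of_nonneg_left hIh (by positivity)
    _ = (1 / (2 * lam)) * R ^ 2 := div_mul_cancel₀ _ hh0.ne'
    _ ≤ (N.card : ℝ) := hNA

end
end

section
/- Let λ ≥ 1 and 0 < R ≤ √n, and set α = 1/(2λ) and β = 1/(8λ²). Let p_1, …, p_n be points of the square [0,√n]², and partition the square into m × m congruent square cells with m = ⌈√(5n)/R⌉. Assume that every cell contains at least R²/λ and at most λR² of the points. Let G be the graph on [n] with an edge {i,j} (i ≠ j) whenever d(p_i, p_j) ≤ R, where d is the Euclidean distance. Then G is an (h, βR/√h)-expander for every h with αR² ≤ h ≤ n/2. -/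
open Finset MeasureTheory

set_option maxHeartbeats 2000000

noncomputable section

namespace GeoExp

def cellAdj (a b : ℕ × ℕ) : Prop :=
  (a.1 = b.1 ∧ (a.2 + 1 = b.2 ∨ b.2 + 1 = a.2)) ∨
  (a.2 = b.2 ∧ (a.1 + 1 = b.1 ∨ b.1 + 1 = a.1))

lemma nat_gap (P : ℕ → Prop) : ∀ (d j1 : ℕ), P j1 → ¬ P (j1 + d) →
    ∃ j, j1 ≤ j ∧ j + 1 ≤ j1 + d ∧ P j ∧ ¬ P (j + 1) := by
  intro d
  induction d with
  | zero => intro j1 hp hq; exact absurd hp (by simpa using hq)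
  | succ d ih =>
    intro j1 hp hq
    by_cases hP : P (j1 + 1)
    · have hq' : ¬ P (j1 + 1 + d) := by
        have : j1 + 1 + d = j1 + (d + 1) := by omega
        rw [this]; exact hq
      obtain ⟨j, hj1, hj2, hj3, hj4⟩ := ih (j1 + 1) hP hq'
      exact ⟨j, by omega, by omega, hj3, hj4⟩
    · exact ⟨j1, le_refl _, by omega, hp, hP⟩

lemma exists_adj_pair (P : ℕ → Prop) {m j1 j2 : ℕ} (h1 : j1 < m) (h2 : j2 < m)
    (hP : P j1) (hQ : ¬ P j2) :
    ∃ a b, a < m ∧ b < m ∧ (a + 1 = b ∨ b + 1 = a) ∧ P a ∧ ¬ P b := by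
  rcases le_or_gt j1 j2 with hle | hlt
  · obtain ⟨d, rfl⟩ := Nat.exists_eq_add_of_le hle
    obtain ⟨j, hj1, hj2, hj3, hj4⟩ := nat_gap P d j1 hP hQ
    exact ⟨j, j + 1, by omega, by omega, Or.inl rfl, hj3, hj4⟩
  · obtain ⟨d, rfl⟩ := Nat.exists_eq_add_of_le hlt.le
    obtain ⟨j, hj1, hj2, hj3, hj4⟩ := nat_gap (fun x => ¬ P x) d j2 hQ (not_not_intro hP)
    exact ⟨j + 1, j, by omega, by omega, Or.inr rfl, not_not.mp hj4, hj3⟩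

lemma iso (m : ℕ) (S B : Finset (ℕ × ℕ)) (hS : S ⊆ Finset.range m ×ˢ Finset.range m)
    (hB : ∀ d ∈ (Finset.range m ×ˢ Finset.range m) \ S, (∃ e ∈ S, cellAdj e d) → d ∈ B) :
    min S.card ((Finset.range m ×ˢ Finset.range m) \ S).card ≤ B.card ^ 2 := by
  classical
  set Q : Finset (ℕ × ℕ) := (Finset.range m ×ˢ Finset.range m) \ S with hQdef
  have hQ : Q ⊆ Finset.range m ×ˢ Finset.range m := Finset.sdiff_subset
  set Rmix : Finset ℕ := (Finset.range m).filter
    (fun i => (∃ j, (i, j) ∈ S) ∧ (∃ j, (i, j) ∈ Q)) with hRdef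
  set Cmix : Finset ℕ := (Finset.range m).filter
    (fun j => (∃ i, (i, j) ∈ S) ∧ (∃ i, (i, j) ∈ Q)) with hCdef
  have memS : ∀ a ∈ S, a.1 < m ∧ a.2 < m := by
    intro a ha; have := hS ha; simp [Finset.mem_product] at this; exact this
  have memQ : ∀ a ∈ Q, a.1 < m ∧ a.2 < m ∧ a ∉ S := by
    intro a ha
    have h1 := Finset.mem_sdiff.mp ha
    have := h1.1; simp [Finset.mem_product] at this
    exact ⟨this.1, this.2, h1.2⟩
  have memQ' : ∀ i j, i < m → j < m → (i, j) ∉ S → (i, j) ∈ Q := by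
    intro i j hi hj hns
    exact Finset.mem_sdiff.mpr ⟨by simp [Finset.mem_product, hi, hj], hns⟩
  -- each mixed row gives a boundary cell
  have hrowB : ∀ i ∈ Rmix, ∃ jb, (i, jb) ∈ B := by
    intro i hi
    rw [hRdef, Finset.mem_filter] at hi
    obtain ⟨him, ⟨j1, hj1⟩, ⟨j2, hj2⟩⟩ := hi
    obtain ⟨a, b, ham, hbm, hadj, hPa, hPb⟩ :=
      exists_adj_pair (fun j => (i, j) ∈ S) (memS _ hj1).2 (memQ _ hj2).2.1 hj1 (memQ _ hj2).2.2
    refine ⟨b, hB _ (memQ' i b (Finset.mem_range.mp him) hbm hPb) ⟨(i, a), hPa, ?_⟩⟩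
    exact Or.inl ⟨rfl, hadj⟩
  have hcolB : ∀ j ∈ Cmix, ∃ ib, (ib, j) ∈ B := by
    intro j hj
    rw [hCdef, Finset.mem_filter] at hj
    obtain ⟨hjm, ⟨i1, hi1⟩, ⟨i2, hi2⟩⟩ := hj
    obtain ⟨a, b, ham, hbm, hadj, hPa, hPb⟩ :=
      exists_adj_pair (fun i => (i, j) ∈ S) (memS _ hi1).1 (memQ _ hi2).1 hi1 (memQ _ hi2).2.2
    refine ⟨b, hB _ (memQ' b j hbm (Finset.mem_range.mp hjm) hPb) ⟨(a, j), hPa, ?_⟩⟩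
    exact Or.inr ⟨rfl, hadj⟩
  have cardR : Rmix.card ≤ B.card := by
    choose! f hf using hrowB
    exact Finset.card_le_card_of_injOn (fun i => (i, f i)) (fun i hi => hf i hi)
      (fun i _ i' _ hh => congrArg Prod.fst hh)
  have cardC : Cmix.card ≤ B.card := by
    choose! f hf using hcolB
    exact Finset.card_le_card_of_injOn (fun j => (f j, j)) (fun j hj => hf j hj)
      (fun j _ j' _ hh => congrArg Prod.snd hh)
  -- full rows / columns
  by_cases hES : ∃ i < m, ∀ j < m, (i, j) ∈ S
  case neg =>
    by_cases hESc : ∃ j < m, ∀ i < m, (i, j) ∈ S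
    case neg =>
      -- S ⊆ Rmix ×ˢ Cmix
      push_neg at hES hESc
      have hsub : S ⊆ Rmix ×ˢ Cmix := by
        intro a ha
        obtain ⟨hi, hj⟩ := memS a ha
        obtain ⟨j', hj'm, hj'⟩ := hES a.1 hi
        obtain ⟨i', hi'm, hi'⟩ := hESc a.2 hj
        rw [Finset.mem_product]
        constructor
        · rw [hRdef, Finset.mem_filter]
          exact ⟨Finset.mem_range.mpr hi, ⟨a.2, by simpa using ha⟩,
            ⟨j', memQ' _ _ hi hj'm hj'⟩⟩
        · rw [hCdef, Finset.mem_filter]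
          exact ⟨Finset.mem_range.mpr hj, ⟨a.1, by simpa using ha⟩,
            ⟨i', memQ' _ _ hi'm hj hi'⟩⟩
      calc min S.card Q.card ≤ S.card := min_le_left _ _
        _ ≤ (Rmix ×ˢ Cmix).card := Finset.card_le_card hsub
        _ = Rmix.card * Cmix.card := Finset.card_product _ _
        _ ≤ B.card * B.card := Nat.mul_le_mul cardR cardC
        _ = B.card ^ 2 := (sq B.card).symm
    case pos =>
      obtain ⟨jS, hjSm, hjS⟩ := hESc
      by_cases hEQr : (∃ i < m, ∀ j < m, (i, j) ∉ S) ∨ (∃ j < m, ∀ i < m, (i, j) ∉ S)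
      · -- a full-Q row or column exists
        have hm : m ≤ B.card := by
          rcases hEQr with ⟨iQ, hiQm, hiQ⟩ | ⟨jQ, hjQm, hjQ⟩
          · exact absurd (hjS iQ hiQm) (hiQ jS hjSm)
          · -- full S column jS, full Q column jQ: every row is mixed
            refine le_trans ?_ cardR
            have : Finset.range m ⊆ Rmix := by
              intro i hi
              rw [hRdef, Finset.mem_filter]
              exact ⟨hi, ⟨jS, hjS i (Finset.mem_range.mp hi)⟩,
                ⟨jQ, memQ' _ _ (Finset.mem_range.mp hi) hjQm (hjQ i (Finset.mem_range.mp hi))⟩⟩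
            simpa using Finset.card_le_card this
        have : Q.card ≤ m * m := by
          refine le_trans (Finset.card_le_card hQ) ?_
          simp [Finset.card_product]
        calc min S.card Q.card ≤ Q.card := min_le_right _ _
          _ ≤ m * m := this
          _ ≤ B.card * B.card := Nat.mul_le_mul hm hm
          _ = B.card ^ 2 := (sq B.card).symm
      · -- no full-Q row and no full-Q column : Q ⊆ Rmix ×ˢ Cmix
        push_neg at hEQr
        obtain ⟨hnr, hnc⟩ := hEQr
        have hsub : Q ⊆ Rmix ×ˢ Cmix := by
          intro a ha
          obtain ⟨hi, hj, hns⟩ := memQ a ha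
          obtain ⟨j', hj'm, hj'⟩ := hnr a.1 hi
          obtain ⟨i', hi'm, hi'⟩ := hnc a.2 hj
          rw [Finset.mem_product]
          constructor
          · rw [hRdef, Finset.mem_filter]
            exact ⟨Finset.mem_range.mpr hi, ⟨j', hj'⟩, ⟨a.2, by simpa using ha⟩⟩
          · rw [hCdef, Finset.mem_filter]
            exact ⟨Finset.mem_range.mpr hj, ⟨i', hi'⟩, ⟨a.1, by simpa using ha⟩⟩
        calc min S.card Q.card ≤ Q.card := min_le_right _ _
          _ ≤ (Rmix ×ˢ Cmix).card := Finset.card_le_card hsub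
          _ = Rmix.card * Cmix.card := Finset.card_product _ _
          _ ≤ B.card * B.card := Nat.mul_le_mul cardR cardC
          _ = B.card ^ 2 := (sq B.card).symm
  case pos =>
    obtain ⟨iS, hiSm, hiS⟩ := hES
    by_cases hEQr : (∃ i < m, ∀ j < m, (i, j) ∉ S) ∨ (∃ j < m, ∀ i < m, (i, j) ∉ S)
    · have hm : m ≤ B.card := by
        rcases hEQr with ⟨iQ, hiQm, hiQ⟩ | ⟨jQ, hjQm, hjQ⟩
        · -- full S row iS, full Q row iQ: every column mixed
          refine le_trans ?_ cardC
          have : Finset.range m ⊆ Cmix := by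
            intro j hj
            rw [hCdef, Finset.mem_filter]
            exact ⟨hj, ⟨iS, hiS j (Finset.mem_range.mp hj)⟩,
              ⟨iQ, memQ' _ _ hiQm (Finset.mem_range.mp hj) (hiQ j (Finset.mem_range.mp hj))⟩⟩
          simpa using Finset.card_le_card this
        · exact absurd (hiS jQ hjQm) (hjQ iS hiSm)
      have : Q.card ≤ m * m := by
        refine le_trans (Finset.card_le_card hQ) ?_
        simp [Finset.card_product]
      calc min S.card Q.card ≤ Q.card := min_le_right _ _
        _ ≤ m * m := this
        _ ≤ B.card * B.card := Nat.mul_le_mul hm hm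
        _ = B.card ^ 2 := (sq B.card).symm
    · push_neg at hEQr
      obtain ⟨hnr, hnc⟩ := hEQr
      have hsub : Q ⊆ Rmix ×ˢ Cmix := by
        intro a ha
        obtain ⟨hi, hj, hns⟩ := memQ a ha
        obtain ⟨j', hj'm, hj'⟩ := hnr a.1 hi
        obtain ⟨i', hi'm, hi'⟩ := hnc a.2 hj
        rw [Finset.mem_product]
        constructor
        · rw [hRdef, Finset.mem_filter]
          exact ⟨Finset.mem_range.mpr hi, ⟨j', hj'⟩, ⟨a.2, by simpa using ha⟩⟩
        · rw [hCdef, Finset.mem_filter]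
          exact ⟨Finset.mem_range.mpr hj, ⟨i', hi'⟩, ⟨a.1, by simpa using ha⟩⟩
      calc min S.card Q.card ≤ Q.card := min_le_right _ _
        _ ≤ (Rmix ×ˢ Cmix).card := Finset.card_le_card hsub
        _ = Rmix.card * Cmix.card := Finset.card_product _ _
        _ ≤ B.card * B.card := Nat.mul_le_mul cardR cardC
        _ = B.card ^ 2 := (sq B.card).symm


lemma numCells_pos {n : ℕ} {R : ℝ} (hn : 0 < n) (hR : 0 < R) : 0 < numCells n R := by
  have h5 : (0:ℝ) < 5 * (n:ℝ) := by positivity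
  exact Nat.ceil_pos.mpr (div_pos (Real.sqrt_pos.mpr h5) hR)

lemma cellLen_nonneg (n : ℕ) (R : ℝ) : 0 ≤ cellLen n R :=
  div_nonneg (Real.sqrt_nonneg _) (Nat.cast_nonneg _)

lemma cellLen_pos {n : ℕ} {R : ℝ} (hn : 0 < n) (hR : 0 < R) : 0 < cellLen n R := by
  have h1 : (0:ℝ) < (n:ℝ) := by exact_mod_cast hn
  exact div_pos (Real.sqrt_pos.mpr h1) (by exact_mod_cast numCells_pos hn hR)

lemma numCells_mul_cellLen {n : ℕ} {R : ℝ} (hm : numCells n R ≠ 0) :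
    (numCells n R : ℝ) * cellLen n R = Real.sqrt n := by
  have : (numCells n R : ℝ) ≠ 0 := by exact_mod_cast hm
  rw [cellLen, mul_div_cancel₀ _ this]

lemma sqrt5_cellLen_le {n : ℕ} {R : ℝ} (hR : 0 < R) : Real.sqrt 5 * cellLen n R ≤ R := by
  by_cases hm : numCells n R = 0
  · rw [cellLen, hm]
    simp [hR.le]
  · have hmR : (0:ℝ) < (numCells n R : ℝ) := by
      exact_mod_cast Nat.pos_of_ne_zero hm
    have hceil : Real.sqrt (5 * n) / R ≤ (numCells n R : ℝ) := Nat.le_ceil _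
    have hsplit : Real.sqrt (5 * n) = Real.sqrt 5 * Real.sqrt n := by
      rw [← Real.sqrt_mul (by norm_num : (0:ℝ) ≤ 5)]
    rw [hsplit] at hceil
    have h1 : Real.sqrt 5 * Real.sqrt n ≤ R * (numCells n R : ℝ) := by
      rw [div_le_iff₀ hR] at hceil; linarith [hceil]
    rw [cellLen, mul_div_assoc', div_le_iff₀ hmR]
    exact h1

lemma inCell_closed {n : ℕ} {R : ℝ} {i j : ℕ} {x : ℝ × ℝ} (hx : inSquare n x)
    (hc : inCell n R i j x) :
    (i:ℝ) * cellLen n R ≤ x.1 ∧ x.1 ≤ ((i:ℝ) + 1) * cellLen n R ∧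
    (j:ℝ) * cellLen n R ≤ x.2 ∧ x.2 ≤ ((j:ℝ) + 1) * cellLen n R := by
  obtain ⟨⟨h1, h2⟩, h3, h4⟩ := hc
  refine ⟨h1, ?_, h3, ?_⟩
  · rcases h2 with h2 | h2
    · exact h2.le
    · have hm : numCells n R ≠ 0 := by omega
      have : ((i:ℝ) + 1) = (numCells n R : ℝ) := by exact_mod_cast congrArg (Nat.cast (R := ℝ)) h2
      rw [this, numCells_mul_cellLen hm]
      exact hx.2.1
  · rcases h4 with h4 | h4
    · exact h4.le
    · have hm : numCells n R ≠ 0 := by omega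
      have : ((j:ℝ) + 1) = (numCells n R : ℝ) := by exact_mod_cast congrArg (Nat.cast (R := ℝ)) h4
      rw [this, numCells_mul_cellLen hm]
      exact hx.2.2.2

lemma cell_dist {n : ℕ} {R : ℝ} (hR : 0 < R) {a b : ℕ × ℕ} (hadj : a = b ∨ cellAdj a b)
    {x y : ℝ × ℝ} (hx : inSquare n x) (hy : inSquare n y)
    (hax : inCell n R a.1 a.2 x) (hby : inCell n R b.1 b.2 y) : euclDist x y ≤ R := by
  set ℓ := cellLen n R with hldef
  have hl : 0 ≤ ℓ := cellLen_nonneg n R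
  obtain ⟨hx1, hx2, hx3, hx4⟩ := inCell_closed hx hax
  obtain ⟨hy1, hy2, hy3, hy4⟩ := inCell_closed hy hby
  have seg : ∀ u w s t : ℝ, u * ℓ ≤ s → s ≤ (u+1) * ℓ → w * ℓ ≤ t → t ≤ (w+1) * ℓ →
      |u - w| ≤ 1 → (s - t)^2 ≤ 4 * ℓ^2 := by
    intro u w s t h1 h2 h3 h4 h5
    obtain ⟨ha, hb⟩ := abs_le.mp h5
    have k1 : (u - w) * ℓ ≤ 1 * ℓ := mul_le_mul_of_nonneg_right hb hl
    have k2 : (-1) * ℓ ≤ (u - w) * ℓ := mul_le_mul_of_nonneg_right ha hl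
    have hub : s - t ≤ 2 * ℓ := by nlinarith
    have hlb : -(2 * ℓ) ≤ s - t := by nlinarith
    calc (s - t)^2 ≤ (2*ℓ)^2 := sq_le_sq' hlb hub
      _ = 4 * ℓ^2 := by ring
  have seg0 : ∀ u s t : ℝ, u * ℓ ≤ s → s ≤ (u+1) * ℓ → u * ℓ ≤ t → t ≤ (u+1) * ℓ →
      (s - t)^2 ≤ ℓ^2 := by
    intro u s t h1 h2 h3 h4
    have hub : s - t ≤ ℓ := by nlinarith
    have hlb : -ℓ ≤ s - t := by nlinarith
    calc (s - t)^2 ≤ ℓ^2 := by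
          have := sq_le_sq' hlb hub
          simpa using this
      _ = ℓ^2 := rfl
  have key : (x.1 - y.1)^2 + (x.2 - y.2)^2 ≤ 5 * ℓ^2 := by
    rcases hadj with rfl | hadj
    · have e1 := seg0 (a.1:ℝ) x.1 y.1 hx1 hx2 hy1 hy2
      have e2 := seg0 (a.2:ℝ) x.2 y.2 hx3 hx4 hy3 hy4
      nlinarith
    · rcases hadj with ⟨he, hor⟩ | ⟨he, hor⟩
      · have hee : ((a.1:ℕ):ℝ) = (b.1:ℝ) := by exact_mod_cast he
        rw [← hee] at hy1 hy2
        have e1 := seg0 (a.1:ℝ) x.1 y.1 hx1 hx2 hy1 hy2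
        have habs : |(a.2:ℝ) - (b.2:ℝ)| ≤ 1 := by
          rcases hor with hcase | hcase
          · have : (a.2:ℝ) + 1 = (b.2:ℝ) := by exact_mod_cast hcase
            rw [abs_le]; constructor <;> linarith
          · have : (b.2:ℝ) + 1 = (a.2:ℝ) := by exact_mod_cast hcase
            rw [abs_le]; constructor <;> linarith
        have e2 := seg (a.2:ℝ) (b.2:ℝ) x.2 y.2 hx3 hx4 hy3 hy4 habs
        linarith
      · have hee : ((a.2:ℕ):ℝ) = (b.2:ℝ) := by exact_mod_cast he
        rw [← hee] at hy3 hy4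
        have e2 := seg0 (a.2:ℝ) x.2 y.2 hx3 hx4 hy3 hy4
        have habs : |(a.1:ℝ) - (b.1:ℝ)| ≤ 1 := by
          rcases hor with hcase | hcase
          · have : (a.1:ℝ) + 1 = (b.1:ℝ) := by exact_mod_cast hcase
            rw [abs_le]; constructor <;> linarith
          · have : (b.1:ℝ) + 1 = (a.1:ℝ) := by exact_mod_cast hcase
            rw [abs_le]; constructor <;> linarith
        have e1 := seg (a.1:ℝ) (b.1:ℝ) x.1 y.1 hx1 hx2 hy1 hy2 habs
        linarith
  calc euclDist x y ≤ Real.sqrt (5 * ℓ^2) := Real.sqrt_le_sqrt key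
    _ = Real.sqrt 5 * ℓ := by
        rw [Real.sqrt_mul (by norm_num : (0:ℝ) ≤ 5), Real.sqrt_sq hl]
    _ ≤ R := sqrt5_cellLen_le hR

lemma exists_coord {n : ℕ} {R : ℝ} (hn : 0 < n) (hR : 0 < R) {t : ℝ} (h0 : 0 ≤ t)
    (h1 : t ≤ Real.sqrt n) :
    ∃ i, i < numCells n R ∧ (i:ℝ) * cellLen n R ≤ t ∧
      (t < ((i:ℝ) + 1) * cellLen n R ∨ i + 1 = numCells n R) := by
  have hm := numCells_pos hn hR
  have hl : 0 < cellLen n R := cellLen_pos hn hR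
  have hsqrt : Real.sqrt n = (numCells n R : ℝ) * cellLen n R :=
    (numCells_mul_cellLen (Nat.pos_iff_ne_zero.mp hm)).symm
  rcases lt_or_eq_of_le h1 with hlt | heq
  · set i := ⌊t / cellLen n R⌋₊ with hidef
    have hle : (i:ℝ) * cellLen n R ≤ t := by
      rw [← le_div_iff₀ hl]
      exact Nat.floor_le (div_nonneg h0 hl.le)
    have hlt2 : t < ((i:ℝ) + 1) * cellLen n R := by
      rw [← div_lt_iff₀ hl]
      exact Nat.lt_floor_add_one _
    have him : i < numCells n R := by
      by_contra hcon
      push_neg at hcon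
      have : (numCells n R : ℝ) * cellLen n R ≤ (i:ℝ) * cellLen n R := by
        apply mul_le_mul_of_nonneg_right _ hl.le
        exact_mod_cast hcon
      rw [← hsqrt] at this
      linarith
    exact ⟨i, him, hle, Or.inl hlt2⟩
  · refine ⟨numCells n R - 1, by omega, ?_, Or.inr (by omega)⟩
    have : ((numCells n R - 1 : ℕ):ℝ) ≤ (numCells n R : ℝ) := by
      exact_mod_cast Nat.sub_le _ _
    calc ((numCells n R - 1 : ℕ):ℝ) * cellLen n R
        ≤ (numCells n R : ℝ) * cellLen n R := mul_le_mul_of_nonneg_right this hl.le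
      _ = t := by rw [← hsqrt, heq]

lemma unique_coord {n : ℕ} {R : ℝ} (hl : 0 < cellLen n R) {i i' : ℕ}
    (hi : i < numCells n R) (hi' : i' < numCells n R) {t : ℝ}
    (ha : (i:ℝ) * cellLen n R ≤ t)
    (hb : t < ((i:ℝ) + 1) * cellLen n R ∨ i + 1 = numCells n R)
    (ha' : (i':ℝ) * cellLen n R ≤ t)
    (hb' : t < ((i':ℝ) + 1) * cellLen n R ∨ i' + 1 = numCells n R) : i = i' := by
  have key : ∀ j j' : ℕ, j < j' → j' < numCells n R →
      (t < ((j:ℝ) + 1) * cellLen n R ∨ j + 1 = numCells n R) →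
      (j':ℝ) * cellLen n R ≤ t → False := by
    intro j j' hjj hj'm hbj haj'
    have hne : j + 1 ≠ numCells n R := by omega
    rcases hbj with hbj | hbj
    · have hcast : ((j:ℝ) + 1) ≤ (j':ℝ) := by exact_mod_cast hjj
      have : ((j:ℝ) + 1) * cellLen n R ≤ (j':ℝ) * cellLen n R :=
        mul_le_mul_of_nonneg_right hcast hl.le
      linarith
    · exact hne hbj
  rcases lt_trichotomy i i' with hlt | heq | hgt
  · exact absurd (key i i' hlt hi' hb ha') (by simp)
  · exact heq
  · exact absurd (key i' i hgt hi hb' ha) (by simp)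



lemma endgame {lam R h nr c N Pc q Bc : ℝ}
    (hlam : 1 ≤ lam) (hR : 0 < R) (hRn2 : R ^ 2 ≤ nr)
    (hh1 : 1 / (2 * lam) * R ^ 2 ≤ h) (hh2 : h ≤ nr / 2)
    (hc1 : 1 ≤ c) (hch : c ≤ h)
    (hq0 : 0 ≤ q) (hPc0 : 0 ≤ Pc) (hBc0 : 0 ≤ Bc)
    (F1 : c ≤ Pc * (lam * R ^ 2))
    (F3 : Bc * (R ^ 2 / lam) ≤ N)
    (F6 : nr - q * (lam * R ^ 2) - c ≤ N)
    (Fmin : min Pc q ≤ Bc ^ 2) :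
    1 / (8 * lam ^ 2) * R / Real.sqrt h * c ≤ N := by
  have hlam0 : (0:ℝ) < lam := by linarith
  have hc0 : (0:ℝ) < c := by linarith
  have hh0 : (0:ℝ) < h := by
    have : (0:ℝ) < 1 / (2 * lam) * R ^ 2 := by positivity
    linarith
  have hsh : 0 < Real.sqrt h := Real.sqrt_pos.mpr hh0
  have hsh2 : Real.sqrt h ^ 2 = h := Real.sq_sqrt hh0.le
  have hn0 : (0:ℝ) ≤ nr := le_trans (by positivity) hRn2
  have F12 : Real.sqrt lam ≤ lam := by
    nlinarith [Real.sq_sqrt hlam0.le, sq_nonneg (Real.sqrt lam - 1)]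
  have hgoal : 1 / (8 * lam ^ 2) * R / Real.sqrt h * c
      = R * (c / Real.sqrt h) / (8 * lam ^ 2) := by ring
  rw [hgoal]
  have hch' : c / Real.sqrt h ≤ Real.sqrt h := by
    rw [div_le_iff₀ hsh]
    nlinarith
  by_cases hsmall : q * (lam * R ^ 2) ≤ nr / 4
  · have hN : nr / 4 ≤ N := by linarith
    have hhn : Real.sqrt h ≤ Real.sqrt nr := Real.sqrt_le_sqrt (by linarith)
    have hkey : R * (c / Real.sqrt h) ≤ nr := by
      have h0' : 0 ≤ c / Real.sqrt h := div_nonneg hc0.le hsh.le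
      have hRsn : R ≤ Real.sqrt nr := by
        have := Real.sqrt_le_sqrt hRn2
        rwa [Real.sqrt_sq hR.le] at this
      calc R * (c / Real.sqrt h) ≤ Real.sqrt nr * Real.sqrt nr :=
            mul_le_mul hRsn (hch'.trans hhn) h0' (Real.sqrt_nonneg _)
        _ = nr := Real.mul_self_sqrt hn0
    have hfin : R * (c / Real.sqrt h) / (8 * lam ^ 2) ≤ nr / 8 :=
      div_le_div₀ hn0 hkey (by norm_num) (by nlinarith)
    linarith
  · push_neg at hsmall
    have hcsq : c / Real.sqrt h ≤ Real.sqrt c := by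
      rw [div_le_iff₀ hsh]
      have h1' : Real.sqrt c ≤ Real.sqrt h := Real.sqrt_le_sqrt hch
      nlinarith [Real.sq_sqrt hc0.le, Real.sqrt_nonneg c]
    rcases le_total Pc q with hmin | hmin
    · -- min is Pc
      have hPB : Pc ≤ Bc ^ 2 := by rw [min_eq_left hmin] at Fmin; exact Fmin
      have hBge : Real.sqrt Pc ≤ Bc := by
        have := Real.sqrt_le_sqrt hPB
        rwa [Real.sqrt_sq hBc0] at this
      have hcP : Real.sqrt c ≤ Real.sqrt lam * R * Real.sqrt Pc := by
        have h1' : c ≤ lam * R ^ 2 * Pc := by linarith [F1, mul_comm Pc (lam * R ^ 2)]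
        calc Real.sqrt c ≤ Real.sqrt (lam * R ^ 2 * Pc) := Real.sqrt_le_sqrt h1'
          _ = Real.sqrt lam * R * Real.sqrt Pc := by
              rw [Real.sqrt_mul (by positivity) Pc, Real.sqrt_mul hlam0.le (R ^ 2),
                Real.sqrt_sq hR.le]
      have step : R * (c / Real.sqrt h) / (8 * lam ^ 2) ≤ Real.sqrt Pc * (R ^ 2 / lam) := by
        rw [div_le_iff₀ (by positivity : (0:ℝ) < 8 * lam ^ 2)]
        have e1 : R * (c / Real.sqrt h) ≤ R * (Real.sqrt lam * R * Real.sqrt Pc) :=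
          mul_le_mul_of_nonneg_left (hcsq.trans hcP) hR.le
        have e2 : Real.sqrt lam * (R ^ 2 * Real.sqrt Pc) ≤ lam * (R ^ 2 * Real.sqrt Pc) :=
          mul_le_mul_of_nonneg_right F12 (by positivity)
        have e3 : (0:ℝ) ≤ lam * (R ^ 2 * Real.sqrt Pc) := by positivity
        have e4 : Real.sqrt Pc * (R ^ 2 / lam) * (8 * lam ^ 2)
            = 8 * lam * (R ^ 2 * Real.sqrt Pc) := by
          field_simp
        calc R * (c / Real.sqrt h) ≤ R * (Real.sqrt lam * R * Real.sqrt Pc) := e1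
          _ = Real.sqrt lam * (R ^ 2 * Real.sqrt Pc) := by ring
          _ ≤ lam * (R ^ 2 * Real.sqrt Pc) := e2
          _ ≤ 8 * lam * (R ^ 2 * Real.sqrt Pc) := by nlinarith
          _ = Real.sqrt Pc * (R ^ 2 / lam) * (8 * lam ^ 2) := e4.symm
      have step2 : Real.sqrt Pc * (R ^ 2 / lam) ≤ Bc * (R ^ 2 / lam) :=
        mul_le_mul_of_nonneg_right hBge (by positivity)
      linarith
    · -- min is q
      have hqB : q ≤ Bc ^ 2 := by rw [min_eq_right hmin] at Fmin; exact Fmin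
      have hBq : Real.sqrt q ≤ Bc := by
        have := Real.sqrt_le_sqrt hqB
        rwa [Real.sqrt_sq hBc0] at this
      have hstep1 : R * (c / Real.sqrt h) / (8 * lam ^ 2)
          ≤ R * Real.sqrt h / (8 * lam ^ 2) := by
        have e1 : R * (c / Real.sqrt h) ≤ R * Real.sqrt h :=
          mul_le_mul_of_nonneg_left hch' hR.le
        exact div_le_div₀ (by positivity) e1 (by positivity) le_rfl
      set X := R * Real.sqrt h / (8 * lam ^ 2) with hXdef
      set Y := Real.sqrt q * (R ^ 2 / lam) with hYdef
      have hX0 : (0:ℝ) ≤ X := by rw [hXdef]; positivity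
      have hY0 : (0:ℝ) ≤ Y := by rw [hYdef]; positivity
      have hsqle : X ^ 2 ≤ Y ^ 2 := by
        have e1 : X ^ 2 = R ^ 2 * h / (64 * lam ^ 4) := by
          rw [hXdef, div_pow, mul_pow, hsh2]
          norm_num
          ring
        have e2 : Y ^ 2 = q * R ^ 4 / lam ^ 2 := by
          rw [hYdef, mul_pow, div_pow, Real.sq_sqrt hq0]
          ring
        rw [e1, e2, div_le_div_iff₀ (by positivity) (by positivity)]
        have hhq : h ≤ 2 * q * lam * R ^ 2 := by nlinarith
        nlinarith [mul_le_mul_of_nonneg_left hhq (by positivity : (0:ℝ) ≤ R ^ 2 * lam ^ 2),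
          mul_nonneg (mul_nonneg (mul_nonneg hq0 (by positivity : (0:ℝ) ≤ R ^ 4))
            (by positivity : (0:ℝ) ≤ lam ^ 3)) (by linarith : (0:ℝ) ≤ lam - 1),
          mul_nonneg (mul_nonneg hq0 (by positivity : (0:ℝ) ≤ R ^ 4))
            (by positivity : (0:ℝ) ≤ lam ^ 4)]
      have hXY : X ≤ Y := by
        have h' := Real.sqrt_le_sqrt hsqle
        rwa [Real.sqrt_sq hX0, Real.sqrt_sq hY0] at h'
      have hYB : Y ≤ Bc * (R ^ 2 / lam) := by
        rw [hYdef]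
        exact mul_le_mul_of_nonneg_right hBq (by positivity)
      linarith


def cellSet (n : ℕ) (R : ℝ) (p : Fin n → ℝ × ℝ) (c : ℕ × ℕ) : Finset (Fin n) := by
  classical exact Finset.univ.filter (fun v => inCell n R c.1 c.2 (p v))

lemma mem_cellSet {n : ℕ} {R : ℝ} {p : Fin n → ℝ × ℝ} {c : ℕ × ℕ} {v : Fin n} :
    v ∈ cellSet n R p c ↔ inCell n R c.1 c.2 (p v) := by
  simp [cellSet]

lemma cellSet_card {n : ℕ} {R : ℝ} {p : Fin n → ℝ × ℝ} (c : ℕ × ℕ) :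
    (cellSet n R p c).card = cellCount n R p c.1 c.2 := rfl

end GeoExp

/-- expansion of the geometric graph for large sets. -/
theorem geo_expander_large (n : ℕ) (lam R : ℝ) (hlam : 1 ≤ lam) (hR : 0 < R)
    (hRn : R ≤ Real.sqrt n)
    (p : Fin n → ℝ × ℝ) (hsq : ∀ v, inSquare n (p v))
    (hcell : ∀ i j : ℕ, i < numCells n R → j < numCells n R →
      R ^ 2 / lam ≤ (cellCount n R p i j : ℝ) ∧ (cellCount n R p i j : ℝ) ≤ lam * R ^ 2)
    (h : ℝ) (h1 : (1 / (2 * lam)) * R ^ 2 ≤ h) (h2 : h ≤ (n : ℝ) / 2) :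
    IsExpander (geoGraph n R p) h ((1 / (8 * lam ^ 2)) * R / Real.sqrt h) := by
  classical
  intro I hI hIh
  obtain ⟨v0, hv0⟩ := hI
  have hn : 0 < n := v0.pos
  have hlam0 : (0:ℝ) < lam := by linarith
  set m := numCells n R with hmdef
  set grd : Finset (ℕ × ℕ) := Finset.range m ×ˢ Finset.range m with hgrd
  have hl : 0 < cellLen n R := GeoExp.cellLen_pos hn hR
  have hmemgrd : ∀ c : ℕ × ℕ, c ∈ grd ↔ c.1 < m ∧ c.2 < m := by
    intro c; rw [hgrd, Finset.mem_product, Finset.mem_range, Finset.mem_range]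
  -- disjointness and covering of cells
  have huniq : ∀ c ∈ grd, ∀ d ∈ grd, ∀ v : Fin n,
      v ∈ GeoExp.cellSet n R p c → v ∈ GeoExp.cellSet n R p d → c = d := by
    intro c hc d hd v hvc hvd
    rw [GeoExp.mem_cellSet] at hvc hvd
    obtain ⟨⟨a1, a2⟩, a3, a4⟩ := hvc
    obtain ⟨⟨b1, b2⟩, b3, b4⟩ := hvd
    rw [hmemgrd] at hc hd
    have e1 := GeoExp.unique_coord hl hc.1 hd.1 a1 a2 b1 b2
    have e2 := GeoExp.unique_coord hl hc.2 hd.2 a3 a4 b3 b4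
    exact Prod.ext e1 e2
  have hdisj : ∀ c ∈ grd, ∀ d ∈ grd, c ≠ d →
      Disjoint (GeoExp.cellSet n R p c) (GeoExp.cellSet n R p d) := by
    intro c hc d hd hne
    rw [Finset.disjoint_left]
    intro v hvc hvd
    exact hne (huniq c hc d hd v hvc hvd)
  have hexists : ∀ v : Fin n, ∃ c ∈ grd, v ∈ GeoExp.cellSet n R p c := by
    intro v
    obtain ⟨h0, hb1, hb2, hb3⟩ := hsq v
    obtain ⟨i, him, hia, hib⟩ := GeoExp.exists_coord hn hR h0 hb1
    obtain ⟨j, hjm, hja, hjb⟩ := GeoExp.exists_coord hn hR hb2 hb3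
    refine ⟨(i, j), (hmemgrd _).mpr ⟨him, hjm⟩, GeoExp.mem_cellSet.mpr ⟨⟨hia, hib⟩, hja, hjb⟩⟩
  have hcover : grd.biUnion (GeoExp.cellSet n R p) = Finset.univ := by
    ext v
    simp only [Finset.mem_biUnion, Finset.mem_univ, iff_true]
    exact hexists v
  -- sum bounds
  have hlow : ∀ C : Finset (ℕ × ℕ), C ⊆ grd →
      (C.card : ℝ) * (R^2 / lam) ≤ ∑ c ∈ C, ((GeoExp.cellSet n R p c).card : ℝ) := by
    intro C hC
    have hb : ∑ c ∈ C, (R^2 / lam) ≤ ∑ c ∈ C, ((GeoExp.cellSet n R p c).card : ℝ) := by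
      apply Finset.sum_le_sum
      intro c hc
      have hcg := (hmemgrd c).mp (hC hc)
      rw [GeoExp.cellSet_card]
      exact (hcell c.1 c.2 hcg.1 hcg.2).1
    simpa [Finset.sum_const, nsmul_eq_mul] using hb
  have hupp : ∀ C : Finset (ℕ × ℕ), C ⊆ grd →
      ∑ c ∈ C, ((GeoExp.cellSet n R p c).card : ℝ) ≤ (C.card : ℝ) * (lam * R^2) := by
    intro C hC
    have hb : ∑ c ∈ C, ((GeoExp.cellSet n R p c).card : ℝ) ≤ ∑ c ∈ C, (lam * R^2) := by
      apply Finset.sum_le_sum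
      intro c hc
      have hcg := (hmemgrd c).mp (hC hc)
      rw [GeoExp.cellSet_card]
      exact (hcell c.1 c.2 hcg.1 hcg.2).2
    simpa [Finset.sum_const, nsmul_eq_mul] using hb
  -- the occupied cells and boundary cells
  set Pcells : Finset (ℕ × ℕ) :=
    grd.filter (fun c => ∃ v ∈ I, inCell n R c.1 c.2 (p v)) with hPdef
  set Bcells : Finset (ℕ × ℕ) :=
    (grd \ Pcells).filter (fun d => ∃ e ∈ Pcells, GeoExp.cellAdj e d) with hBdef
  have hPg : Pcells ⊆ grd := Finset.filter_subset _ _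
  have hBg : Bcells ⊆ grd := (Finset.filter_subset _ _).trans Finset.sdiff_subset
  -- membership in the neighborhood
  have mem_nbhd : ∀ v : Fin n, v ∉ I → (∃ u ∈ I, euclDist (p u) (p v) ≤ R) →
      v ∈ nbhd (geoGraph n R p) I := by
    rintro v hv ⟨u, hu, hd⟩
    have hne : u ≠ v := fun he => hv (he ▸ hu)
    have hadj : (geoGraph n R p).Adj u v := by
      rw [geoGraph, SimpleGraph.fromRel_adj]
      exact ⟨hne, Or.inl hd⟩
    simp only [nbhd, Finset.mem_filter, Finset.mem_univ, true_and]
    exact ⟨hv, u, hu, hadj⟩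
  have hsub1 : (Pcells.biUnion (GeoExp.cellSet n R p)) \ I ⊆ nbhd (geoGraph n R p) I := by
    intro v hv
    rw [Finset.mem_sdiff, Finset.mem_biUnion] at hv
    obtain ⟨⟨c, hcP, hvc⟩, hvI⟩ := hv
    rw [hPdef, Finset.mem_filter] at hcP
    obtain ⟨hcg, u, huI, hu⟩ := hcP
    exact mem_nbhd v hvI ⟨u, huI,
      GeoExp.cell_dist hR (Or.inl rfl) (hsq u) (hsq v) hu (GeoExp.mem_cellSet.mp hvc)⟩
  have hsub2 : Bcells.biUnion (GeoExp.cellSet n R p) ⊆ nbhd (geoGraph n R p) I := by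
    intro v hv
    rw [Finset.mem_biUnion] at hv
    obtain ⟨d, hdB, hvd⟩ := hv
    rw [hBdef, Finset.mem_filter, Finset.mem_sdiff] at hdB
    obtain ⟨⟨hdg, hdnP⟩, e, heP, hadj⟩ := hdB
    have hvin : inCell n R d.1 d.2 (p v) := GeoExp.mem_cellSet.mp hvd
    have hvI : v ∉ I := fun hvI =>
      hdnP (by rw [hPdef, Finset.mem_filter]; exact ⟨hdg, v, hvI, hvin⟩)
    rw [hPdef, Finset.mem_filter] at heP
    obtain ⟨heg, u, huI, hu⟩ := heP
    exact mem_nbhd v hvI ⟨u, huI,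
      GeoExp.cell_dist hR (Or.inr hadj) (hsq u) (hsq v) hu hvin⟩
  -- cardinality bookkeeping
  have cardPU : (Pcells.biUnion (GeoExp.cellSet n R p)).card
      = ∑ c ∈ Pcells, (GeoExp.cellSet n R p c).card :=
    Finset.card_biUnion (fun c hc d hd hne => hdisj c (hPg hc) d (hPg hd) hne)
  have cardBU : (Bcells.biUnion (GeoExp.cellSet n R p)).card
      = ∑ c ∈ Bcells, (GeoExp.cellSet n R p c).card :=
    Finset.card_biUnion (fun c hc d hd hne => hdisj c (hBg hc) d (hBg hd) hne)
  have cardTotal : (∑ c ∈ grd, (GeoExp.cellSet n R p c).card) = n := by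
    rw [← Finset.card_biUnion hdisj, hcover, Finset.card_univ, Fintype.card_fin]
  have hIPU : I ⊆ Pcells.biUnion (GeoExp.cellSet n R p) := by
    intro v hvI
    obtain ⟨c, hcg, hvc⟩ := hexists v
    rw [Finset.mem_biUnion]
    refine ⟨c, ?_, hvc⟩
    rw [hPdef, Finset.mem_filter]
    exact ⟨hcg, v, hvI, GeoExp.mem_cellSet.mp hvc⟩
  have hiso : min Pcells.card (grd \ Pcells).card ≤ Bcells.card ^ 2 := by
    apply GeoExp.iso m Pcells Bcells hPg
    intro d hd hex
    rw [hBdef, Finset.mem_filter]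
    exact ⟨hd, hex⟩
  -- real-number facts and conclusion
  have F1R : (I.card : ℝ) ≤ (Pcells.card : ℝ) * (lam * R ^ 2) := by
    have h' : I.card ≤ ∑ c ∈ Pcells, (GeoExp.cellSet n R p c).card := by
      rw [← cardPU]; exact Finset.card_le_card hIPU
    have h'' : ((I.card : ℝ)) ≤ ∑ c ∈ Pcells, ((GeoExp.cellSet n R p c).card : ℝ) := by
      exact_mod_cast h'
    linarith [hupp Pcells hPg]
  have F3R : (Bcells.card : ℝ) * (R ^ 2 / lam) ≤ ((nbhd (geoGraph n R p) I).card : ℝ) := by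
    have h' : (Bcells.biUnion (GeoExp.cellSet n R p)).card ≤ (nbhd (geoGraph n R p) I).card :=
      Finset.card_le_card hsub2
    rw [cardBU] at h'
    have h'' : (∑ c ∈ Bcells, ((GeoExp.cellSet n R p c).card : ℝ))
        ≤ ((nbhd (geoGraph n R p) I).card : ℝ) := by exact_mod_cast h'
    linarith [hlow Bcells hBg]
  have F6R : (n : ℝ) - ((grd \ Pcells).card : ℝ) * (lam * R ^ 2) - (I.card : ℝ)
      ≤ ((nbhd (geoGraph n R p) I).card : ℝ) := by
    have hsplitN : (∑ c ∈ grd \ Pcells, (GeoExp.cellSet n R p c).card)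
        + (∑ c ∈ Pcells, (GeoExp.cellSet n R p c).card) = n := by
      rw [Finset.sum_sdiff hPg]; exact cardTotal
    have hR1 : (∑ c ∈ grd \ Pcells, ((GeoExp.cellSet n R p c).card : ℝ))
        + (∑ c ∈ Pcells, ((GeoExp.cellSet n R p c).card : ℝ)) = (n : ℝ) := by
      exact_mod_cast hsplitN
    have h1' : (Pcells.biUnion (GeoExp.cellSet n R p)).card ≤
        ((Pcells.biUnion (GeoExp.cellSet n R p)) \ I).card + I.card :=
      Finset.card_le_card_sdiff_add_card
    have h2' : ((Pcells.biUnion (GeoExp.cellSet n R p)) \ I).card ≤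
        (nbhd (geoGraph n R p) I).card := Finset.card_le_card hsub1
    have h3' : (Pcells.biUnion (GeoExp.cellSet n R p)).card ≤
        (nbhd (geoGraph n R p) I).card + I.card := by omega
    rw [cardPU] at h3'
    have h4R : (∑ c ∈ Pcells, ((GeoExp.cellSet n R p c).card : ℝ))
        ≤ ((nbhd (geoGraph n R p) I).card : ℝ) + (I.card : ℝ) := by exact_mod_cast h3'
    linarith [hupp (grd \ Pcells) Finset.sdiff_subset]
  have FminR : min ((Pcells.card : ℝ)) (((grd \ Pcells).card : ℝ))
      ≤ ((Bcells.card : ℝ)) ^ 2 := by exact_mod_cast hiso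
  have hRn2 : R ^ 2 ≤ (n : ℝ) := by
    have hs : Real.sqrt (n : ℝ) ^ 2 = (n : ℝ) := Real.sq_sqrt (Nat.cast_nonneg n)
    nlinarith [Real.sqrt_nonneg (n : ℝ)]
  have hc1R : (1 : ℝ) ≤ (I.card : ℝ) := by
    exact_mod_cast Finset.card_pos.mpr ⟨v0, hv0⟩
  exact GeoExp.endgame hlam hR hRn2 h1 h2 hc1R hIh (Nat.cast_nonneg _) (Nat.cast_nonneg _)
    (Nat.cast_nonneg _) F1R F3R F6R FminR

end
end

section
/- Let R > 0, r ≥ 0, D > 0, and for each node i ∈ [n] and time t ∈ ℕ let p_{i,t} ∈ ℝ² be the position of node i at time t, where d(p_{i,t+1}, p_{i,t}) ≤ r for all i and t (d is the Euclidean distance). Let G_t be the graph on [n] with an edge {i,j} whenever d(p_{i,t}, p_{j,t}) ≤ R. If u, v ∈ [n] are nodes with d(p_{u,0}, p_{v,0}) ≥ D, then in the flooding process on (G_t) with source v, node u is not informed at any time step t with t < D/(R + 2r); consequently the flooding time from source v is at least D/(R + 2r). -/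
open Finset MeasureTheory

noncomputable section

def toE2 (x : ℝ × ℝ) : EuclideanSpace ℝ (Fin 2) := WithLp.toLp 2 ![x.1, x.2]

lemma euclDist_eq (x y : ℝ × ℝ) : euclDist x y = dist (toE2 x) (toE2 y) := by
  rw [EuclideanSpace.dist_eq]
  simp [euclDist, toE2, Fin.sum_univ_two, Real.dist_eq, sq_abs]

lemma euclDist_self (x : ℝ × ℝ) : euclDist x x = 0 := by simp [euclDist_eq]

lemma euclDist_comm (x y : ℝ × ℝ) : euclDist x y = euclDist y x := by
  rw [euclDist_eq, euclDist_eq, dist_comm]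

lemma euclDist_triangle (x y z : ℝ × ℝ) : euclDist x z ≤ euclDist x y + euclDist y z := by
  rw [euclDist_eq, euclDist_eq, euclDist_eq]; exact dist_triangle _ _ _

lemma drift_bound {n : ℕ} {r : ℝ} (p : ℕ → Fin n → ℝ × ℝ)
    (hmove : ∀ (t : ℕ) (i : Fin n), euclDist (p (t + 1) i) (p t i) ≤ r)
    (i : Fin n) : ∀ t : ℕ, euclDist (p 0 i) (p t i) ≤ t * r := by
  intro t
  induction t with
  | zero => simp [euclDist_self]
  | succ t ih =>
    calc euclDist (p 0 i) (p (t + 1) i)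
        ≤ euclDist (p 0 i) (p t i) + euclDist (p t i) (p (t + 1) i) := euclDist_triangle _ _ _
      _ ≤ t * r + r := by
          rw [euclDist_comm (p t i)]
          exact add_le_add ih (hmove t i)
      _ = (t + 1 : ℕ) * r := by push_cast; ring

lemma informed_dist_bound {n : ℕ} {R r : ℝ} (hR : 0 ≤ R) (hr : 0 ≤ r)
    (p : ℕ → Fin n → ℝ × ℝ)
    (hmove : ∀ (t : ℕ) (i : Fin n), euclDist (p (t + 1) i) (p t i) ≤ r)
    (v : Fin n) : ∀ t : ℕ, ∀ w ∈ informed (fun t' => geoGraph n R (p t')) v t,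
      euclDist (p t w) (p 0 v) ≤ t * (R + r) := by
  intro t
  induction t with
  | zero =>
    intro w hw
    simp only [informed, Finset.mem_singleton] at hw
    subst hw
    simp [euclDist_self]
  | succ t ih =>
    intro w hw
    simp only [informed, Finset.mem_union] at hw
    rcases hw with hw | hw
    · calc euclDist (p (t + 1) w) (p 0 v)
          ≤ euclDist (p (t + 1) w) (p t w) + euclDist (p t w) (p 0 v) := euclDist_triangle _ _ _
        _ ≤ r + t * (R + r) := add_le_add (hmove t w) (ih w hw)
        _ ≤ (t + 1 : ℕ) * (R + r) := by push_cast; nlinarith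
    · simp only [nbhd, Finset.mem_filter] at hw
      obtain ⟨-, -, u', hu', hadj⟩ := hw
      have hRd : euclDist (p t w) (p t u') ≤ R := by
        rcases hadj.2 with h | h
        · rwa [euclDist_comm]
        · exact h
      calc euclDist (p (t + 1) w) (p 0 v)
          ≤ euclDist (p (t + 1) w) (p t w) + euclDist (p t w) (p 0 v) := euclDist_triangle _ _ _
        _ ≤ r + (euclDist (p t w) (p t u') + euclDist (p t u') (p 0 v)) :=
            add_le_add (hmove t w) (euclDist_triangle _ _ _)
        _ ≤ r + (R + t * (R + r)) := by
            exact add_le_add le_rfl (add_le_add hRd (ih u' hu'))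
        _ ≤ (t + 1 : ℕ) * (R + r) := by push_cast; nlinarith


/-- deterministic lower bound on flooding from a far-away source. -/
theorem geo_flooding_lb_det (n : ℕ) (R r D : ℝ) (hR : 0 < R) (hr : 0 ≤ r) (hD : 0 < D)
    (p : ℕ → Fin n → ℝ × ℝ)
    (hmove : ∀ (t : ℕ) (i : Fin n), euclDist (p (t + 1) i) (p t i) ≤ r)
    (u v : Fin n) (huv : D ≤ euclDist (p 0 u) (p 0 v)) :
    (∀ t : ℕ, (t : ℝ) < D / (R + 2 * r) →
      u ∉ informed (fun t' => geoGraph n R (p t')) v t) ∧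
    (∀ t : ℕ, (t : ℝ) < D / (R + 2 * r) →
      informed (fun t' => geoGraph n R (p t')) v t ≠ Finset.univ) := by
  have hRr : 0 < R + 2 * r := by linarith
  have main : ∀ t : ℕ, (t : ℝ) < D / (R + 2 * r) →
      u ∉ informed (fun t' => geoGraph n R (p t')) v t := by
    intro t ht hu
    have h1 : euclDist (p t u) (p 0 v) ≤ t * (R + r) :=
      informed_dist_bound hR.le hr p hmove v t u hu
    have h2 : euclDist (p 0 u) (p t u) ≤ t * r := drift_bound p hmove u t
    have h3 : D ≤ t * (R + 2 * r) := by
      calc D ≤ euclDist (p 0 u) (p 0 v) := huv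
        _ ≤ euclDist (p 0 u) (p t u) + euclDist (p t u) (p 0 v) := euclDist_triangle _ _ _
        _ ≤ t * r + t * (R + r) := add_le_add h2 h1
        _ = t * (R + 2 * r) := by ring
    have : D / (R + 2 * r) ≤ (t : ℝ) := (div_le_iff₀ hRr).2 h3
    linarith
  refine ⟨main, fun t ht hcontra => main t ht ?_⟩
  rw [hcontra]
  exact Finset.mem_univ u


end
end

section
/- There exist constants c, c' > 0 such that the following holds. Let p̂ satisfy c·(log n)/n ≤ p̂ ≤ 1, and let (G_t)_{t∈ℕ} be a sequence of random graphs on [n] such that every G_t is distributed as G_{n,p̂} (as holds for a stationary edge-Markovian evolving graph). Then with probability at least 1 − 1/n the flooding time of (G_t) is at least c' · log n / log(n·p̂); in fact, with probability at least 1 − 1/n, for every source s and every time t < log(n/2)/log(2·n·p̂) the set of informed nodes has size at most (2·n·p̂)^t < n/2. -/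
open Finset MeasureTheory

noncomputable section

lemma mem_nbhd_singleton {n : ℕ} {G : SimpleGraph (Fin n)} {v u : Fin n} :
    u ∈ nbhd G {v} ↔ u ≠ v ∧ G.Adj v u := by
  simp [nbhd]

open scoped Classical in
lemma card_filter_eq_nbhd {n : ℕ} (H : SimpleGraph (Fin n)) (v : Fin n) :
    (Finset.univ.filter
      (fun e : {e : Sym2 (Fin n) // ¬ e.IsDiag} => e.1 ∈ H.edgeSet ∧ v ∈ e.1)).card
      = (nbhd H {v}).card := by
  classical
  symm
  apply Finset.card_bij (fun u hu => (⟨s(v,u), by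
      rw [mem_nbhd_singleton] at hu
      simp [Sym2.mk_isDiag_iff]
      exact fun h => (hu.1 h.symm).elim⟩ : {e : Sym2 (Fin n) // ¬ e.IsDiag}))
  · intro u hu
    rw [mem_nbhd_singleton] at hu
    simp only [mem_filter, mem_univ, true_and]
    exact ⟨(SimpleGraph.mem_edgeSet H).mpr hu.2, Sym2.mem_mk_left v u⟩
  · intro u₁ h₁ u₂ h₂ h
    have := congrArg Subtype.val h
    simp only [Sym2.congr_right] at this
    exact this
  · intro e he
    simp only [mem_filter, mem_univ, true_and] at he
    obtain ⟨u, hu⟩ := (Sym2.mem_iff_exists).mp he.2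
    have hne : u ≠ v := by
      intro h
      apply e.2
      rw [hu, h]
      simp [Sym2.mk_isDiag_iff]
    refine ⟨u, ?_, ?_⟩
    · rw [mem_nbhd_singleton]
      refine ⟨hne, ?_⟩
      have := he.1
      rw [hu] at this
      exact (SimpleGraph.mem_edgeSet H).mp this
    · exact Subtype.ext hu.symm

open scoped Classical in
lemma card_edge {n : ℕ} (H : SimpleGraph (Fin n)) :
    Nat.card H.edgeSet
      = (Finset.univ.filter (fun e : {e : Sym2 (Fin n) // ¬ e.IsDiag} => e.1 ∈ H.edgeSet)).card := by
  classical
  rw [Nat.card_eq_fintype_card, ← Fintype.card_subtype]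
  exact Fintype.card_congr
    (Equiv.subtypeSubtypeEquivSubtype
      (fun {e} he => SimpleGraph.not_isDiag_of_mem_edgeSet H he)).symm

open scoped Classical in
lemma psi_bijective {n : ℕ} :
    Function.Bijective (fun H : SimpleGraph (Fin n) =>
      Finset.univ.filter (fun e : {e : Sym2 (Fin n) // ¬ e.IsDiag} => e.1 ∈ H.edgeSet)) := by
  classical
  constructor
  · intro H₁ H₂ h
    rw [← SimpleGraph.edgeSet_inj]
    ext e
    simp only [Finset.ext_iff, Finset.mem_filter, Finset.mem_univ, true_and] at h
    constructor <;> intro he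
    · have hd := SimpleGraph.not_isDiag_of_mem_edgeSet H₁ he
      exact (h ⟨e, hd⟩).mp he
    · have hd := SimpleGraph.not_isDiag_of_mem_edgeSet H₂ he
      exact (h ⟨e, hd⟩).mpr he
  · intro s
    refine ⟨SimpleGraph.fromEdgeSet {e | ∃ h : ¬ e.IsDiag, (⟨e, h⟩ : {e : Sym2 (Fin n) // ¬ e.IsDiag}) ∈ s}, ?_⟩
    ext e
    simp only [Finset.mem_filter, Finset.mem_univ, true_and,
      SimpleGraph.edgeSet_fromEdgeSet, Set.mem_diff, Set.mem_setOf_eq]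
    constructor
    · rintro ⟨⟨h, hs⟩, _⟩
      convert hs <;> exact (Subtype.coe_eta e h).symm ▸ rfl
    · intro hs
      exact ⟨⟨e.2, by simpa using hs⟩, e.2⟩

open scoped Classical in
lemma card_filter_mem_eq {n : ℕ} (v : Fin n) :
    (Finset.univ.filter (fun e : {e : Sym2 (Fin n) // ¬ e.IsDiag} => v ∈ e.1)).card = n - 1 := by
  classical
  have h1 : (Finset.univ.filter (fun e : {e : Sym2 (Fin n) // ¬ e.IsDiag} => v ∈ e.1))
      = (Finset.univ.filter
        (fun e : {e : Sym2 (Fin n) // ¬ e.IsDiag} => e.1 ∈ (⊤ : SimpleGraph (Fin n)).edgeSet ∧ v ∈ e.1)) := by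
    apply Finset.filter_congr
    intro e _
    simp [SimpleGraph.edgeSet_top, e.2]
  rw [h1]
  have hh := card_filter_eq_nbhd (⊤ : SimpleGraph (Fin n)) v
  rw [show (Finset.univ.filter
        (fun e : {e : Sym2 (Fin n) // ¬ e.IsDiag} => e.1 ∈ (⊤ : SimpleGraph (Fin n)).edgeSet ∧ v ∈ e.1)).card
      = (nbhd (⊤ : SimpleGraph (Fin n)) {v}).card from by convert hh using 2; congr!]
  have h2 : nbhd (⊤ : SimpleGraph (Fin n)) {v} = Finset.univ.erase v := by
    ext u
    rw [mem_nbhd_singleton]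
    simp [eq_comm, ne_comm]
  rw [h2, Finset.card_erase_of_mem (Finset.mem_univ v), Finset.card_univ, Fintype.card_fin]

lemma key_identity {n : ℕ} (p x : ℝ) (v : Fin n) :
    ∑ H : SimpleGraph (Fin n),
      (p ^ (Nat.card H.edgeSet) * (1 - p) ^ (n.choose 2 - Nat.card H.edgeSet))
        * x ^ ((nbhd H {v}).card)
      = (p * x + (1 - p)) ^ (n - 1) := by
  classical
  set E := {e : Sym2 (Fin n) // ¬ e.IsDiag}
  have hcardE : Fintype.card E = n.choose 2 := by
    rw [Sym2.card_subtype_not_diag, Fintype.card_fin]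
  -- reindex the sum over graphs as a sum over finsets of non-diagonal edges
  have hreindex :
      ∑ H : SimpleGraph (Fin n),
        (p ^ (Nat.card H.edgeSet) * (1 - p) ^ (n.choose 2 - Nat.card H.edgeSet))
          * x ^ ((nbhd H {v}).card)
      = ∑ s : Finset E,
        (p ^ s.card * (1 - p) ^ (n.choose 2 - s.card)) * x ^ ((s.filter (fun e => v ∈ e.1)).card) := by
    apply Fintype.sum_bijective _ psi_bijective
    intro H
    rw [← card_edge, Finset.filter_filter, card_filter_eq_nbhd]
  rw [hreindex]
  -- now compute via prod_add
  have hprod := Finset.prod_add (fun e : E => p * (if v ∈ e.1 then x else 1))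
    (fun _ : E => (1 - p)) Finset.univ
  have hL : ∏ e : E, (p * (if v ∈ e.1 then x else 1) + (1 - p)) = (p * x + (1 - p)) ^ (n - 1) := by
    calc ∏ e : E, (p * (if v ∈ e.1 then x else 1) + (1 - p))
        = ∏ e : E, (if v ∈ e.1 then p * x + (1-p) else 1) := by
          apply Finset.prod_congr rfl; intro e _; split <;> ring
      _ = (p * x + (1-p)) ^ (n - 1) := by
          rw [Finset.prod_ite, Finset.prod_const, Finset.prod_const, one_pow, mul_one,
            card_filter_mem_eq]
  rw [← hL, hprod, Finset.powerset_univ]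
  apply Finset.sum_congr rfl
  intro s _
  have h3 : ∏ e ∈ s, (p * (if v ∈ e.1 then x else 1))
      = p ^ s.card * x ^ ((s.filter (fun e => v ∈ e.1)).card) := by
    rw [Finset.prod_mul_distrib, Finset.prod_const, Finset.prod_ite, Finset.prod_const,
      Finset.prod_const_one, mul_one]
  have h4 : ∏ _e ∈ Finset.univ \ s, (1 - p) = (1 - p) ^ (n.choose 2 - s.card) := by
    rw [Finset.prod_const, Finset.card_sdiff_of_subset (Finset.subset_univ s), Finset.card_univ, hcardE]
  rw [h3, h4]
  ring

open scoped Classical in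
lemma bad_sum_le {n : ℕ} {p : ℝ} (hp0 : 0 ≤ p) (hp1 : p ≤ 1) (hn : 1 ≤ n)
    (hnp : 99 * Real.log n ≤ n * p) (v : Fin n) :
    ∑ H ∈ Finset.univ.filter
        (fun H : SimpleGraph (Fin n) => 2*(n:ℝ)*p - 1 < ((nbhd H {v}).card : ℝ)),
      (p ^ (Nat.card H.edgeSet) * (1 - p) ^ (n.choose 2 - Nat.card H.edgeSet))
    ≤ 2 / (n:ℝ)^33 := by
  classical
  set w : SimpleGraph (Fin n) → ℝ :=
    fun H => p ^ (Nat.card H.edgeSet) * (1 - p) ^ (n.choose 2 - Nat.card H.edgeSet) with hw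
  set B : Finset (SimpleGraph (Fin n)) := Finset.univ.filter
      (fun H : SimpleGraph (Fin n) => 2*(n:ℝ)*p - 1 < ((nbhd H {v}).card : ℝ)) with hB
  have hwn : ∀ H, 0 ≤ w H := fun H =>
    mul_nonneg (pow_nonneg hp0 _) (pow_nonneg (by linarith) _)
  have hn0 : (0:ℝ) < n := by exact_mod_cast Nat.lt_of_lt_of_le Nat.zero_lt_one hn
  have hlogn : 0 ≤ Real.log n := Real.log_nonneg (by exact_mod_cast hn)
  have hnp0 : 0 ≤ (n:ℝ) * p := mul_nonneg (le_of_lt hn0) hp0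
  have step1 : ∑ H ∈ B, w H
      ≤ (2:ℝ) ^ ((1:ℝ) - 2*(n:ℝ)*p) * ∑ H : SimpleGraph (Fin n), w H * 2 ^ ((nbhd H {v}).card) := by
    rw [Finset.mul_sum]
    calc ∑ H ∈ B, w H
        ≤ ∑ H ∈ B, (2:ℝ) ^ ((1:ℝ) - 2*(n:ℝ)*p) * (w H * 2 ^ ((nbhd H {v}).card)) := by
          apply Finset.sum_le_sum
          intro H hH
          have hd : 2*(n:ℝ)*p - 1 < ((nbhd H {v}).card : ℝ) := (Finset.mem_filter.mp hH).2
          have h1 : (1:ℝ) ≤ (2:ℝ) ^ ((1:ℝ) - 2*(n:ℝ)*p) * 2 ^ ((nbhd H {v}).card) := by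
            rw [← Real.rpow_natCast (2:ℝ) ((nbhd H {v}).card), ← Real.rpow_add two_pos]
            rw [show (1:ℝ) = (2:ℝ) ^ (0:ℝ) from (Real.rpow_zero 2).symm]
            apply Real.rpow_le_rpow_of_exponent_le one_le_two
            linarith
          calc w H = w H * 1 := (mul_one _).symm
            _ ≤ w H * ((2:ℝ) ^ ((1:ℝ) - 2*(n:ℝ)*p) * 2 ^ ((nbhd H {v}).card)) :=
                mul_le_mul_of_nonneg_left h1 (hwn H)
            _ = (2:ℝ) ^ ((1:ℝ) - 2*(n:ℝ)*p) * (w H * 2 ^ ((nbhd H {v}).card)) := by ring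
      _ ≤ ∑ H : SimpleGraph (Fin n),
            (2:ℝ) ^ ((1:ℝ) - 2*(n:ℝ)*p) * (w H * 2 ^ ((nbhd H {v}).card)) := by
          apply Finset.sum_le_sum_of_subset_of_nonneg (Finset.filter_subset _ _)
          intro H _ _
          exact mul_nonneg (Real.rpow_nonneg (by norm_num) _)
            (mul_nonneg (hwn H) (pow_nonneg (by norm_num) _))
  have step2 : ∑ H : SimpleGraph (Fin n), w H * 2 ^ ((nbhd H {v}).card)
      = (1 + p) ^ (n - 1) := by
    rw [hw]
    have h := key_identity (n := n) p 2 v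
    rw [h]
    ring_nf
  refine le_trans step1 ?_
  rw [step2]
  have e1 : (2:ℝ) ^ ((1:ℝ) - 2*(n:ℝ)*p) = Real.exp (Real.log 2 * ((1:ℝ) - 2*(n:ℝ)*p)) :=
    Real.rpow_def_of_pos two_pos _
  have e2 : (1 + p) ^ (n - 1) ≤ Real.exp (((n - 1 : ℕ) : ℝ) * p) := by
    rw [Real.exp_nat_mul]
    apply pow_le_pow_left₀ (by linarith)
    linarith [Real.add_one_le_exp p]
  have e3 : ((n - 1 : ℕ) : ℝ) * p ≤ (n:ℝ) * p := by
    apply mul_le_mul_of_nonneg_right _ hp0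
    have : ((n - 1 : ℕ) : ℝ) ≤ (n : ℕ) := by exact_mod_cast Nat.sub_le n 1
    exact this
  have hl2 := Real.log_two_gt_d9
  calc (2:ℝ) ^ ((1:ℝ) - 2*(n:ℝ)*p) * (1 + p) ^ (n - 1)
      ≤ Real.exp (Real.log 2 * ((1:ℝ) - 2*(n:ℝ)*p)) * Real.exp ((n:ℝ) * p) := by
        rw [e1]
        apply mul_le_mul_of_nonneg_left _ (le_of_lt (Real.exp_pos _))
        exact le_trans e2 (Real.exp_le_exp.mpr e3)
    _ = Real.exp (Real.log 2 * ((1:ℝ) - 2*(n:ℝ)*p) + (n:ℝ) * p) := (Real.exp_add _ _).symm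
    _ ≤ Real.exp (Real.log 2 - 33 * Real.log n) := by
        apply Real.exp_le_exp.mpr
        nlinarith [hnp, hnp0, hl2]
    _ = 2 / (n:ℝ) ^ 33 := by
        rw [Real.exp_sub, Real.exp_log two_pos]
        congr 1
        rw [show (33:ℝ) * Real.log n = ((33:ℕ):ℝ) * Real.log n by norm_num,
          Real.exp_nat_mul, Real.exp_log hn0]

lemma nbhd_subset_biUnion {n : ℕ} (G : SimpleGraph (Fin n)) (I : Finset (Fin n)) :
    nbhd G I ⊆ I.biUnion (fun u => nbhd G {u}) := by
  classical
  intro v hv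
  simp only [nbhd, Finset.mem_filter, Finset.mem_univ, true_and] at hv
  obtain ⟨hvI, u, huI, hadj⟩ := hv
  apply Finset.mem_biUnion.mpr
  refine ⟨u, huI, ?_⟩
  rw [mem_nbhd_singleton]
  exact ⟨fun h => hvI (h ▸ huI), hadj⟩

lemma informed_growth {n : ℕ} (Gs : ℕ → SimpleGraph (Fin n)) (src : Fin n) (T : ℕ) (D : ℝ)
    (hD : 0 ≤ D) (h : ∀ t, t < T → ∀ v : Fin n, ((nbhd (Gs t) {v}).card : ℝ) ≤ D) :
    ∀ t, t ≤ T → ((informed Gs src t).card : ℝ) ≤ (D + 1) ^ t := by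
  classical
  intro t
  induction t with
  | zero => intro _; simp [informed]
  | succ t ih =>
    intro hle
    have ht : t ≤ T := Nat.le_of_succ_le hle
    have htT : t < T := Nat.lt_of_succ_le hle
    have hI := ih ht
    set I := informed Gs src t with hI'
    have hnb : ((nbhd (Gs t) I).card : ℝ) ≤ D * I.card := by
      have h1 : (nbhd (Gs t) I).card ≤ ∑ u ∈ I, (nbhd (Gs t) {u}).card :=
        le_trans (Finset.card_le_card (nbhd_subset_biUnion _ _)) (Finset.card_biUnion_le)
      have h2 : ((∑ u ∈ I, (nbhd (Gs t) {u}).card : ℕ) : ℝ) ≤ ∑ u ∈ I, D := by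
        push_cast
        exact Finset.sum_le_sum (fun u _ => h t htT u)
      rw [Finset.sum_const, nsmul_eq_mul] at h2
      calc ((nbhd (Gs t) I).card : ℝ) ≤ ((∑ u ∈ I, (nbhd (Gs t) {u}).card : ℕ) : ℝ) := by
            exact_mod_cast h1
        _ ≤ I.card * D := h2
        _ = D * I.card := mul_comm _ _
    have hcard : ((informed Gs src (t+1)).card : ℝ) ≤ I.card + (nbhd (Gs t) I).card := by
      rw [show informed Gs src (t+1) = I ∪ nbhd (Gs t) I from rfl]
      exact_mod_cast Finset.card_union_le _ _
    have hpos : (0:ℝ) ≤ (I.card : ℝ) := Nat.cast_nonneg _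
    calc ((informed Gs src (t+1)).card : ℝ)
        ≤ I.card + D * I.card := by linarith
      _ = (D + 1) * I.card := by ring
      _ ≤ (D + 1) * (D + 1) ^ t := mul_le_mul_of_nonneg_left hI (by linarith)
      _ = (D + 1) ^ (t + 1) := by ring

/-- lower bound on flooding time of stationary edge-MEG. -/
theorem edge_flooding_lb :
    ∃ c c' : ℝ, 0 < c ∧ 0 < c' ∧
      ∀ (n : ℕ) (phat : ℝ) (Ω : Type) [MeasurableSpace Ω] (μ : Measure Ω)
        [IsProbabilityMeasure μ] (Gs : ℕ → Ω → SimpleGraph (Fin n)),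
        2 ≤ n → c * Real.log n / n ≤ phat → phat ≤ 1 →
        (∀ t : ℕ, IsErdosRenyi μ (Gs t) phat) →
        ENNReal.ofReal (1 - 1 / (n : ℝ)) ≤
          μ {ω |
            (∀ t : ℕ, (t : ℝ) < c' * Real.log n / Real.log ((n : ℝ) * phat) →
              ∃ src : Fin n, informed (fun t' => Gs t' ω) src t ≠ Finset.univ) ∧
            (∀ (src : Fin n) (t : ℕ),
              (t : ℝ) < Real.log ((n : ℝ) / 2) / Real.log (2 * (n : ℝ) * phat) →
              ((informed (fun t' => Gs t' ω) src t).card : ℝ) ≤ (2 * (n : ℝ) * phat) ^ t ∧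
              (2 * (n : ℝ) * phat) ^ t < (n : ℝ) / 2)} := by
  classical
  refine ⟨99, 1/4, by norm_num, by norm_num, ?_⟩
  intro n phat Ω _ μ _ Gs hn2 hplo hphi hER
  have hn0 : (0:ℝ) < n := by
    have : (0:ℕ) < n := by omega
    exact_mod_cast this
  have hn1R : (1:ℝ) < n := by exact_mod_cast hn2
  have hlogn_pos : 0 < Real.log n := Real.log_pos hn1R
  have hnp : 99 * Real.log n ≤ (n:ℝ) * phat := by
    rw [div_le_iff₀ hn0] at hplo
    linarith
  have hp0 : 0 < phat := by
    have h0 : (0:ℝ) < 99 * Real.log n / n := by positivity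
    linarith [le_trans h0.le hplo]
  have hnpn : (n:ℝ) * phat ≤ n := by nlinarith
  have hn4 : 4 ≤ n := by
    by_contra hcon
    push_neg at hcon
    interval_cases n
    · have h2 : 99 * Real.log 2 ≤ 2 := by
        have := hnp
        push_cast at this
        nlinarith
      nlinarith [Real.log_two_gt_d9]
    · have hl : Real.log 2 ≤ Real.log 3 := Real.log_le_log (by norm_num) (by norm_num)
      have h2 : 99 * Real.log 3 ≤ 3 := by
        have := hnp
        push_cast at this
        nlinarith
      nlinarith [Real.log_two_gt_d9]
  have hn4R : (4:ℝ) ≤ n := by exact_mod_cast hn4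
  have hlog4 : Real.log 4 ≤ Real.log n := Real.log_le_log (by norm_num) hn4R
  have hlog4eq : Real.log 4 = 2 * Real.log 2 := by
    rw [show (4:ℝ) = 2^2 by norm_num, Real.log_pow]
    push_cast; ring
  have h2log2 : 2 * Real.log 2 ≤ Real.log n := by linarith
  have hnp99 : (99:ℝ) ≤ (n:ℝ) * phat := by nlinarith [Real.log_two_gt_d9]
  have hnp_pos : (0:ℝ) < (n:ℝ) * phat := by linarith
  set L := Real.log ((n:ℝ) * phat) with hL
  have hL_log2 : Real.log 2 ≤ L := Real.log_le_log (by norm_num) (by linarith)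
  have hL_pos : 0 < L := Real.log_pos (by linarith)
  set L2 := Real.log (2 * (n:ℝ) * phat) with hL2
  have hL2_eq : L2 = Real.log 2 + L := by
    rw [hL2, show 2 * (n:ℝ) * phat = 2 * ((n:ℝ) * phat) by ring,
      Real.log_mul two_ne_zero (ne_of_gt hnp_pos)]
  have hL2_pos : 0 < L2 := by
    have := Real.log_pos one_lt_two
    linarith
  have hL2_1 : (1:ℝ) ≤ L2 := by
    rw [hL2, Real.le_log_iff_exp_le (by linarith)]
    have := Real.exp_one_lt_d9
    nlinarith
  set D := 2 * (n:ℝ) * phat - 1 with hD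
  have hD0 : 0 ≤ D := by simp only [hD]; linarith
  set Good := {ω : Ω | ∀ t, t < n → ∀ v : Fin n, ((nbhd (Gs t ω) {v}).card : ℝ) ≤ D}
    with hGood
  -- deterministic part
  have hsub : Good ⊆ {ω : Ω |
      (∀ t : ℕ, (t : ℝ) < 1/4 * Real.log n / Real.log ((n : ℝ) * phat) →
        ∃ src : Fin n, informed (fun t' => Gs t' ω) src t ≠ Finset.univ) ∧
      (∀ (src : Fin n) (t : ℕ),
        (t : ℝ) < Real.log ((n : ℝ) / 2) / Real.log (2 * (n : ℝ) * phat) →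
        ((informed (fun t' => Gs t' ω) src t).card : ℝ) ≤ (2 * (n : ℝ) * phat) ^ t ∧
        (2 * (n : ℝ) * phat) ^ t < (n : ℝ) / 2)} := by
    intro ω hω
    simp only [Set.mem_setOf_eq] at hω ⊢
    have key : ∀ (src : Fin n) (t : ℕ),
        (t : ℝ) < Real.log ((n : ℝ) / 2) / L2 →
        ((informed (fun t' => Gs t' ω) src t).card : ℝ) ≤ (2 * (n : ℝ) * phat) ^ t ∧
        (2 * (n : ℝ) * phat) ^ t < (n : ℝ) / 2 := by
      intro src t ht
      have hlogn2_nonneg : 0 ≤ Real.log ((n:ℝ)/2) := Real.log_nonneg (by linarith)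
      have htn : t ≤ n := by
        have h1 : Real.log ((n:ℝ)/2) / L2 ≤ Real.log ((n:ℝ)/2) :=
          div_le_self hlogn2_nonneg hL2_1
        have h2 : Real.log ((n:ℝ)/2) ≤ Real.log n :=
          Real.log_le_log (by linarith) (by linarith)
        have h3 : Real.log n ≤ (n:ℝ) - 1 := Real.log_le_sub_one_of_pos hn0
        have : (t:ℝ) < (n:ℝ) := by linarith
        exact le_of_lt (by exact_mod_cast this)
      have hgrow := informed_growth (fun t' => Gs t' ω) src n D hD0
        (fun t' ht' v => hω t' ht' v) t htn
      have hD1 : D + 1 = 2 * (n:ℝ) * phat := by simp only [hD]; ring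
      constructor
      · rw [← hD1]; exact hgrow
      · have h2np_pos : (0:ℝ) < 2 * (n:ℝ) * phat := by linarith
        have hlogp : Real.log ((2 * (n:ℝ) * phat) ^ t) = t * L2 := by
          rw [Real.log_pow]
        have hmul : (t:ℝ) * L2 < Real.log ((n:ℝ)/2) := (lt_div_iff₀ hL2_pos).mp ht
        calc (2 * (n:ℝ) * phat) ^ t
            = Real.exp (Real.log ((2 * (n:ℝ) * phat) ^ t)) :=
              (Real.exp_log (pow_pos h2np_pos t)).symm
          _ = Real.exp ((t:ℝ) * L2) := by rw [hlogp]
          _ < Real.exp (Real.log ((n:ℝ)/2)) := Real.exp_lt_exp.mpr hmul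
          _ = (n:ℝ)/2 := Real.exp_log (by linarith)
      
    refine ⟨?_, key⟩
    intro t ht
    have hthr : 1/4 * Real.log n / L ≤ Real.log ((n:ℝ)/2) / L2 := by
      rw [div_le_div_iff₀ hL_pos hL2_pos]
      have hlogdiv : Real.log ((n:ℝ)/2) = Real.log n - Real.log 2 :=
        Real.log_div (ne_of_gt hn0) two_ne_zero
      rw [hlogdiv, hL2_eq]
      nlinarith [mul_le_mul_of_nonneg_right hL_log2 hlogn_pos.le,
        mul_le_mul_of_nonneg_right h2log2 hL_pos.le, Real.log_pos one_lt_two]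
    have hkey := key ⟨0, by omega⟩ t (lt_of_lt_of_le ht hthr)
    refine ⟨⟨0, by omega⟩, ?_⟩
    intro heq
    have hcard := hkey.1
    rw [heq] at hcard
    have huniv : ((Finset.univ : Finset (Fin n)).card : ℝ) = n := by
      rw [Finset.card_univ, Fintype.card_fin]
    rw [huniv] at hcard
    linarith [hkey.2]
  -- probabilistic part
  set BadF : Fin n → Finset (SimpleGraph (Fin n)) :=
    fun v => Finset.univ.filter (fun H => 2*(n:ℝ)*phat - 1 < ((nbhd H {v}).card : ℝ)) with hBadF
  have hGoodc : Goodᶜ ⊆ ⋃ t ∈ Finset.range n, ⋃ v ∈ (Finset.univ : Finset (Fin n)),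
      ⋃ H ∈ BadF v, {ω : Ω | Gs t ω = H} := by
    intro ω hω
    simp only [Set.mem_compl_iff, hGood, Set.mem_setOf_eq, not_forall] at hω
    obtain ⟨t, ht, v, hv⟩ := hω
    simp only [Set.mem_iUnion]
    refine ⟨t, Finset.mem_range.mpr ht, v, Finset.mem_univ v, Gs t ω, ?_, rfl⟩
    rw [hBadF]
    simp only [Finset.mem_filter, Finset.mem_univ, true_and]
    rw [hD] at hv
    exact lt_of_not_ge hv
  have hbadsum : ∀ v : Fin n, ∑ H ∈ BadF v,
      (phat ^ (Nat.card H.edgeSet) * (1 - phat) ^ (n.choose 2 - Nat.card H.edgeSet))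
      ≤ 2 / (n:ℝ)^33 := fun v => bad_sum_le hp0.le hphi (by omega) hnp v
  have hofr : ENNReal.ofReal ((n:ℝ) * ((n:ℝ) * (2 / (n:ℝ)^33))) ≤ ENNReal.ofReal (1/(n:ℝ)) := by
    apply ENNReal.ofReal_le_ofReal
    have h230 : (2:ℝ) ≤ (n:ℝ)^30 := by
      calc (2:ℝ) ≤ 4^30 := by norm_num
        _ ≤ (n:ℝ)^30 := pow_le_pow_left₀ (by norm_num) hn4R 30
    rw [show (n:ℝ) * ((n:ℝ) * (2 / (n:ℝ)^33)) = 2 * (n:ℝ)^2 / (n:ℝ)^33 by ring,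
      div_le_div_iff₀ (by positivity) hn0]
    have : 2 * (n:ℝ)^3 ≤ (n:ℝ)^33 := by
      calc 2 * (n:ℝ)^3 ≤ (n:ℝ)^30 * (n:ℝ)^3 :=
            mul_le_mul_of_nonneg_right h230 (by positivity)
        _ = (n:ℝ)^33 := by ring
    nlinarith
  have hμbad : μ Goodᶜ ≤ ENNReal.ofReal (1/(n:ℝ)) := by
    refine le_trans (measure_mono hGoodc) ?_
    have hstep : μ (⋃ t ∈ Finset.range n, ⋃ v ∈ (Finset.univ : Finset (Fin n)),
        ⋃ H ∈ BadF v, {ω : Ω | Gs t ω = H})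
        ≤ ∑ t ∈ Finset.range n, ∑ v : Fin n, ∑ H ∈ BadF v, μ {ω : Ω | Gs t ω = H} :=
      le_trans (measure_biUnion_finset_le _ _)
        (Finset.sum_le_sum (fun t _ => le_trans (measure_biUnion_finset_le _ _)
          (Finset.sum_le_sum (fun v _ => measure_biUnion_finset_le _ _))))
    refine le_trans hstep ?_
    have hval : ∀ t : ℕ, ∀ v : Fin n,
        ∑ H ∈ BadF v, μ {ω : Ω | Gs t ω = H} ≤ ENNReal.ofReal (2 / (n:ℝ)^33) := by
      intro t v
      have heq : ∑ H ∈ BadF v, μ {ω : Ω | Gs t ω = H}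
          = ENNReal.ofReal (∑ H ∈ BadF v,
            (phat ^ (Nat.card H.edgeSet) * (1 - phat) ^ (n.choose 2 - Nat.card H.edgeSet))) := by
        rw [ENNReal.ofReal_sum_of_nonneg (fun H _ =>
          mul_nonneg (pow_nonneg hp0.le _) (pow_nonneg (by linarith) _))]
        exact Finset.sum_congr rfl (fun H _ => hER t H)
      rw [heq]
      exact ENNReal.ofReal_le_ofReal (hbadsum v)
    calc ∑ t ∈ Finset.range n, ∑ v : Fin n, ∑ H ∈ BadF v, μ {ω : Ω | Gs t ω = H}
        ≤ ∑ t ∈ Finset.range n, ∑ v : Fin n, ENNReal.ofReal (2 / (n:ℝ)^33) :=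
          Finset.sum_le_sum (fun t _ => Finset.sum_le_sum (fun v _ => hval t v))
      _ = (n : ENNReal) * ((n : ENNReal) * ENNReal.ofReal (2 / (n:ℝ)^33)) := by
          rw [Finset.sum_const, Finset.sum_const, Finset.card_range, Finset.card_univ,
            Fintype.card_fin, nsmul_eq_mul, nsmul_eq_mul]
      _ = ENNReal.ofReal ((n:ℝ) * ((n:ℝ) * (2 / (n:ℝ)^33))) := by
          rw [ENNReal.ofReal_mul (by positivity), ENNReal.ofReal_mul (by positivity),
            ENNReal.ofReal_natCast]
      _ ≤ ENNReal.ofReal (1/(n:ℝ)) := hofr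
  calc ENNReal.ofReal (1 - 1/(n:ℝ))
      = 1 - ENNReal.ofReal (1/(n:ℝ)) := by
        rw [ENNReal.ofReal_sub _ (by positivity), ENNReal.ofReal_one]
    _ ≤ 1 - μ Goodᶜ := tsub_le_tsub_left hμbad 1
    _ ≤ μ Good := by
        rw [tsub_le_iff_right]
        calc (1:ENNReal) = μ Set.univ := measure_univ.symm
          _ = μ (Good ∪ Goodᶜ) := by rw [Set.union_compl_self]
          _ ≤ μ Good + μ Goodᶜ := measure_union_le _ _
    _ ≤ _ := measure_mono hsub

end
end

section
/- There is a constant C > 0 such that for every integer T ≥ 2, Σ_{h=1}^{T} 1/( h · log(1 + T/h) ) ≤ C · (1 + log log T), where log denotes the natural logarithm. -/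
open Finset MeasureTheory

noncomputable section

private lemma log_diff_ge (x y : ℝ) (hy : 0 < y) (hxy : y ≤ x) :
    (x - y) / x ≤ Real.log x - Real.log y := by
  have hx : 0 < x := lt_of_lt_of_le hy hxy
  have h := Real.log_le_sub_one_of_pos (show 0 < y / x by positivity)
  rw [Real.log_div (ne_of_gt hy) (ne_of_gt hx)] at h
  have heq : (x - y) / x = 1 - y / x := by field_simp
  rw [heq]
  linarith

private lemma telescope_sum (u : ℕ → ℝ) (T : ℕ) :
    ∑ h ∈ Finset.Icc 1 T, (u h - u (h + 1)) = u 1 - u (T + 1) := by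
  induction T with
  | zero => simp
  | succ n ih =>
    rw [Finset.sum_Icc_succ_top (by omega), ih]
    ring

private lemma aux_term (T h : ℕ) (hT : 2 ≤ T) (hmem : h ∈ Finset.Icc 1 T) :
    1 / ((h : ℝ) * Real.log (1 + (T : ℝ) / (h : ℝ))) ≤
      4 * (Real.log (Real.log (4 * (T : ℝ)) - Real.log (h : ℝ)) -
           Real.log (Real.log (4 * (T : ℝ)) - Real.log ((h : ℝ) + 1))) := by
  rw [Finset.mem_Icc] at hmem
  obtain ⟨h1, hhT⟩ := hmem
  set a : ℝ := (h : ℝ) with hadef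
  set t : ℝ := (T : ℝ) with htdef
  have ha1 : (1 : ℝ) ≤ a := by rw [hadef]; exact_mod_cast h1
  have hat : a ≤ t := by rw [hadef, htdef]; exact_mod_cast hhT
  have ht2 : (2 : ℝ) ≤ t := by rw [htdef]; exact_mod_cast hT
  have ha0 : 0 < a := by linarith
  have ht0 : 0 < t := by linarith
  set L : ℝ := Real.log (4 * t) with hLdef
  have hdiv : L - Real.log a = Real.log (4 * t / a) := by
    rw [Real.log_div (by positivity) (ne_of_gt ha0)]
  have hlog4pos : 0 < Real.log 4 := Real.log_pos (by norm_num)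
  have hLa : Real.log 4 ≤ L - Real.log a := by
    rw [hdiv]
    apply Real.log_le_log (by norm_num)
    rw [le_div_iff₀ ha0]; nlinarith
  have hLa0 : 0 < L - Real.log a := lt_of_lt_of_le hlog4pos hLa
  have hLa1 : 0 < L - Real.log (a + 1) := by
    have h' : Real.log (a + 1) < L := by
      apply Real.log_lt_log (by linarith)
      nlinarith
    linarith
  -- log(1 + t/a) ≥ (L - log a)/2
  have hsq : 4 * (t / a) ≤ (1 + t / a) ^ 2 := by nlinarith [sq_nonneg (1 - t / a)]
  have hlog1 : L - Real.log a ≤ 2 * Real.log (1 + t / a) := by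
    have h1' : Real.log (4 * (t / a)) ≤ Real.log ((1 + t / a) ^ 2) :=
      Real.log_le_log (by positivity) hsq
    rw [Real.log_pow] at h1'
    have h2' : Real.log (4 * (t / a)) = L - Real.log a := by
      rw [hdiv, mul_div_assoc]
    rw [h2'] at h1'
    push_cast at h1'
    linarith
  have hlogpos : 0 < Real.log (1 + t / a) := by linarith
  -- increments of log
  have hstep1 : 1 / (a + 1) ≤ Real.log (a + 1) - Real.log a := by
    have h' := log_diff_ge (a + 1) a ha0 (by linarith)
    have heq : (a + 1 - a) / (a + 1) = 1 / (a + 1) := by ring_nf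
    rw [heq] at h'
    exact h'
  have hmono : Real.log a ≤ Real.log (a + 1) := Real.log_le_log ha0 (by linarith)
  have hstep2 : (Real.log (a + 1) - Real.log a) / (L - Real.log a) ≤
      Real.log (L - Real.log a) - Real.log (L - Real.log (a + 1)) := by
    have h' := log_diff_ge (L - Real.log a) (L - Real.log (a + 1)) hLa1 (by linarith)
    have heq : L - Real.log a - (L - Real.log (a + 1)) = Real.log (a + 1) - Real.log a := by
      ring
    rw [heq] at h'
    exact h'
  have hstep3 : 1 / ((a + 1) * (L - Real.log a)) ≤
      Real.log (L - Real.log a) - Real.log (L - Real.log (a + 1)) := by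
    have h' : (1 / (a + 1)) / (L - Real.log a) ≤
        (Real.log (a + 1) - Real.log a) / (L - Real.log a) := by
      gcongr
    rw [div_div] at h'
    linarith
  -- combine
  have hkey1 : 1 / (a * Real.log (1 + t / a)) ≤ 2 / (a * (L - Real.log a)) := by
    rw [div_le_div_iff₀ (by positivity) (by positivity)]
    nlinarith
  have hkey2 : 2 / (a * (L - Real.log a)) ≤ 4 * (1 / ((a + 1) * (L - Real.log a))) := by
    rw [mul_one_div, div_le_div_iff₀ (by positivity) (by positivity)]
    nlinarith
  calc 1 / (a * Real.log (1 + t / a)) ≤ 2 / (a * (L - Real.log a)) := hkey1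
    _ ≤ 4 * (1 / ((a + 1) * (L - Real.log a))) := hkey2
    _ ≤ 4 * (Real.log (L - Real.log a) - Real.log (L - Real.log (a + 1))) := by
        linarith

/-- the first-phase sum is `O(1 + log log T)`. -/
theorem phase1_sum :
    ∃ C : ℝ, 0 < C ∧ ∀ T : ℕ, 2 ≤ T →
      ∑ h ∈ Finset.Icc 1 T, 1 / ((h : ℝ) * Real.log (1 + (T : ℝ) / (h : ℝ))) ≤
        C * (1 + Real.log (Real.log T)) := by
  refine ⟨20, by norm_num, ?_⟩
  intro T hT
  have ht2 : (2 : ℝ) ≤ (T : ℝ) := by exact_mod_cast hT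
  set t : ℝ := (T : ℝ) with htdef
  set u : ℕ → ℝ := fun h => Real.log (Real.log (4 * t) - Real.log (h : ℝ)) with hu
  have hsum : ∑ h ∈ Finset.Icc 1 T, 1 / ((h : ℝ) * Real.log (1 + t / (h : ℝ)))
      ≤ ∑ h ∈ Finset.Icc 1 T, 4 * (u h - u (h + 1)) := by
    apply Finset.sum_le_sum
    intro h hh
    have h' := aux_term T h hT hh
    simp only [hu]
    push_cast
    convert h' using 4
  rw [← Finset.mul_sum, telescope_sum] at hsum
  -- numeric bounds
  have hlog2lt : Real.log 2 < 0.6931471808 := Real.log_two_lt_d9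
  have hlog2gt : 0.6931471803 < Real.log 2 := Real.log_two_gt_d9
  have hlogt : Real.log 2 ≤ Real.log t := Real.log_le_log (by norm_num) ht2
  have hlogtpos : 0 < Real.log t := by linarith
  have hl4 : Real.log 4 = 2 * Real.log 2 := by
    rw [show (4 : ℝ) = 2 ^ 2 by norm_num, Real.log_pow]
    push_cast; ring
  have hu1 : u 1 ≤ Real.log 4 + Real.log (Real.log t) := by
    have h1 : Real.log (4 * t) ≤ 4 * Real.log t := by
      rw [Real.log_mul (by norm_num) (by linarith)]
      linarith
    have h0 : 0 < Real.log (4 * t) := Real.log_pos (by nlinarith)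
    have h2 : Real.log (Real.log (4 * t)) ≤ Real.log (4 * Real.log t) :=
      Real.log_le_log h0 h1
    rw [Real.log_mul (by norm_num) (ne_of_gt hlogtpos)] at h2
    simpa [hu, Real.log_one] using h2
  have hu2 : Real.log (Real.log 2) ≤ u (T + 1) := by
    have hq : Real.log 2 ≤ Real.log (4 * t) - Real.log (((T + 1 : ℕ) : ℝ)) := by
      push_cast
      have he : Real.log (4 * t) = Real.log 2 + Real.log (2 * t) := by
        rw [← Real.log_mul (by norm_num) (by positivity)]
        ring_nf
      have h2 : Real.log (t + 1) ≤ Real.log (2 * t) :=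
        Real.log_le_log (by linarith) (by linarith)
      linarith
    exact Real.log_le_log (Real.log_pos one_lt_two) hq
  have hloglog2 : -Real.log 2 ≤ Real.log (Real.log 2) := by
    have h12 : (1 : ℝ) / 2 ≤ Real.log 2 := by linarith
    have h' := Real.log_le_log (by norm_num : (0 : ℝ) < 1 / 2) h12
    rw [show (1 : ℝ) / 2 = 2⁻¹ by norm_num, Real.log_inv] at h'
    linarith
  have hllt : Real.log (Real.log 2) ≤ Real.log (Real.log t) :=
    Real.log_le_log (Real.log_pos one_lt_two) hlogt
  have hfin : 4 * (u 1 - u (T + 1)) ≤ 20 * (1 + Real.log (Real.log t)) := by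
    nlinarith [hu1, hu2, hloglog2, hllt, hl4, hlog2lt, hlog2gt]
  calc ∑ h ∈ Finset.Icc 1 T, 1 / ((h : ℝ) * Real.log (1 + t / (h : ℝ)))
      ≤ 4 * (u 1 - u (T + 1)) := hsum
    _ ≤ 20 * (1 + Real.log (Real.log t)) := hfin

end
end

section
/- For all constants α, β > 0 there is a constant C > 0 such that the following holds for every n and every R > 0 with 1 ≤ αR² ≤ n/2: Σ_{h=⌈αR²⌉}^{⌊n/2⌋} 1/( h · log(1 + βR/√h) ) ≤ C · √n / R, where log denotes the natural logarithm. -/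
open Finset MeasureTheory

noncomputable section

lemma sum_inv_sqrt_le (N : ℕ) :
    ∑ h ∈ Finset.Icc 1 N, 1 / Real.sqrt h ≤ 2 * Real.sqrt N := by
  induction N with
  | zero => simp
  | succ N ih =>
    rw [Finset.sum_Icc_succ_top (by omega)]
    have hs : Real.sqrt N * Real.sqrt N = N := Real.mul_self_sqrt (by positivity)
    have ht : Real.sqrt (N + 1) * Real.sqrt (N + 1) = (N : ℝ) + 1 :=
      Real.mul_self_sqrt (by positivity)
    have htpos : 0 < Real.sqrt ((N : ℕ) + 1 : ℕ) := Real.sqrt_pos.2 (by positivity)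
    push_cast at htpos ⊢
    have h1 : 1 / Real.sqrt ((N : ℝ) + 1) ≤ 2 * Real.sqrt ((N:ℝ)+1) - 2 * Real.sqrt N := by
      rw [div_le_iff₀ (by positivity)]
      nlinarith [Real.sqrt_nonneg (N : ℝ), Real.sqrt_nonneg ((N:ℝ)+1),
        sq_nonneg (Real.sqrt ((N:ℝ)+1) - Real.sqrt N)]
    linarith

lemma term_bound (alpha beta R : ℝ) (ha : 0 < alpha) (hb : 0 < beta) (hR : 0 < R)
    (h : ℕ) (h1 : 1 ≤ h) (h2 : alpha * R ^ 2 ≤ (h : ℝ)) :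
    1 / ((h : ℝ) * Real.log (1 + beta * R / Real.sqrt h)) ≤
      (1 / beta + 1 / Real.sqrt alpha) * (1 / (R * Real.sqrt h)) := by
  set s := Real.sqrt h with hsdef
  have hspos : 0 < s := Real.sqrt_pos.2 (by exact_mod_cast h1)
  have hss : s * s = (h : ℝ) := Real.mul_self_sqrt (by positivity)
  have hhpos : (0:ℝ) < h := by exact_mod_cast h1
  have hsa : Real.sqrt alpha * R ≤ s := by
    have := Real.sqrt_le_sqrt h2
    rwa [Real.sqrt_mul ha.le, Real.sqrt_sq hR.le] at this
  have hsapos : 0 < Real.sqrt alpha := Real.sqrt_pos.2 ha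
  set u := beta * R / s with hudef
  have hupos : 0 < u := by positivity
  have hlog : u / (1 + u) ≤ Real.log (1 + u) := by
    have := Real.one_sub_inv_le_log_of_pos (x := 1 + u) (by linarith)
    have e : 1 - (1 + u)⁻¹ = u / (1 + u) := by field_simp; ring
    linarith [e ▸ this]
  have hlogpos : 0 < Real.log (1 + u) :=
    lt_of_lt_of_le (by positivity) hlog
  have step1 : 1 / ((h : ℝ) * Real.log (1 + u)) ≤ 1 / ((h:ℝ) * (u / (1 + u))) := by
    apply one_div_le_one_div_of_le (by positivity)
    exact mul_le_mul_of_nonneg_left hlog hhpos.le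
  refine step1.trans ?_
  have e : 1 / ((h:ℝ) * (u / (1 + u))) = 1 / (s * (beta * R)) + 1 / (h:ℝ) := by
    rw [hudef, ← hss]
    field_simp
  rw [e]
  have b1 : 1 / (s * (beta * R)) = 1 / beta * (1 / (R * s)) := by
    field_simp
  have b2 : 1 / (h:ℝ) ≤ 1 / Real.sqrt alpha * (1 / (R * s)) := by
    rw [← hss]
    have : 1 / (s * s) ≤ 1 / (Real.sqrt alpha * (R * s)) :=
      one_div_le_one_div_of_le (by positivity) (by nlinarith)
    calc 1 / (s * s) ≤ 1 / (Real.sqrt alpha * (R * s)) := this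
      _ = 1 / Real.sqrt alpha * (1 / (R * s)) := by field_simp
  rw [add_mul]
  linarith [b1]

/-- the second-phase sum is `O(√n / R)`. -/
theorem phase2_sum (alpha beta : ℝ) (ha : 0 < alpha) (hb : 0 < beta) :
    ∃ C : ℝ, 0 < C ∧ ∀ (n : ℕ) (R : ℝ), 0 < R →
      1 ≤ alpha * R ^ 2 → alpha * R ^ 2 ≤ (n : ℝ) / 2 →
      ∑ h ∈ Finset.Icc ⌈alpha * R ^ 2⌉₊ (n / 2),
          1 / ((h : ℝ) * Real.log (1 + beta * R / Real.sqrt h)) ≤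
        C * Real.sqrt n / R := by
  have hsapos : 0 < Real.sqrt alpha := Real.sqrt_pos.2 ha
  refine ⟨2 * (1 / beta + 1 / Real.sqrt alpha), by positivity, ?_⟩
  intro n R hR hge1 hle
  set K := 1 / beta + 1 / Real.sqrt alpha with hK
  set a := ⌈alpha * R ^ 2⌉₊ with haa
  have ha1 : 1 ≤ a := Nat.one_le_ceil_iff.2 (by nlinarith)
  calc ∑ h ∈ Finset.Icc a (n / 2),
        1 / ((h : ℝ) * Real.log (1 + beta * R / Real.sqrt h))
      ≤ ∑ h ∈ Finset.Icc a (n / 2), K * (1 / (R * Real.sqrt h)) := by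
        apply Finset.sum_le_sum
        intro h hh
        rw [Finset.mem_Icc] at hh
        exact term_bound alpha beta R ha hb hR h (le_trans ha1 hh.1)
          (le_trans (Nat.le_ceil _) (by exact_mod_cast hh.1))
    _ = (K / R) * ∑ h ∈ Finset.Icc a (n / 2), 1 / Real.sqrt h := by
        rw [Finset.mul_sum]
        exact Finset.sum_congr rfl fun h _ => by ring
    _ ≤ (K / R) * ∑ h ∈ Finset.Icc 1 (n / 2), 1 / Real.sqrt h := by
        apply mul_le_mul_of_nonneg_left _ (by positivity)
        apply Finset.sum_le_sum_of_subset_of_nonneg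
          (Finset.Icc_subset_Icc_left ha1)
        intro i _ _; positivity
    _ ≤ (K / R) * (2 * Real.sqrt (n / 2 : ℕ)) :=
        mul_le_mul_of_nonneg_left (sum_inv_sqrt_le _) (by positivity)
    _ ≤ (K / R) * (2 * Real.sqrt n) := by
        apply mul_le_mul_of_nonneg_left _ (by positivity)
        have : ((n / 2 : ℕ) : ℝ) ≤ (n : ℝ) := by exact_mod_cast Nat.div_le_self n 2
        have := Real.sqrt_le_sqrt this
        linarith
    _ = 2 * K * Real.sqrt n / R := by ring


end
end

section
/- For every constant c ≥ 1 there is a constant C > 0 such that the following holds for every n ≥ 3 and every p̂ with e²·c/n ≤ p̂ ≤ 1: Σ_{i=⌊1/p̂⌋+1}^{⌈n/c⌉−1} 1/( i · log(1 + n/(c·i)) ) ≤ C · (1 + log log(n·p̂)), where log denotes the natural logarithm. -/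
open Finset MeasureTheory

noncomputable section

lemma my_telescope (F : ℕ → ℝ) (s : ℕ) : ∀ e : ℕ, s ≤ e →
    ∑ i ∈ Finset.Icc s e, (F (i-1) - F i) = F (s-1) - F e := by
  intro e he
  induction e, he using Nat.le_induction with
  | base => simp
  | succ e he ih =>
      rw [← Finset.Ico_add_one_right_eq_Icc, Finset.sum_Ico_succ_top (by omega), Finset.Ico_add_one_right_eq_Icc, ih]
      simp only [Nat.add_sub_cancel]
      ring

lemma my_two_log (y : ℝ) (hy : 0 < y) : 1 + Real.log y ≤ 2 * Real.log (1 + y) := by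
  have h4 : Real.exp 1 * y ≤ (1+y)^2 := by nlinarith [Real.exp_one_lt_d9, sq_nonneg (y-1)]
  calc 1 + Real.log y = Real.log (Real.exp 1 * y) := by
        rw [Real.log_mul (Real.exp_pos 1).ne' hy.ne', Real.log_exp]
    _ ≤ Real.log ((1+y)^2) := Real.log_le_log (by positivity) h4
    _ = 2 * Real.log (1+y) := by rw [Real.log_pow]; push_cast; ring

lemma my_key (N x : ℝ) (hx : 2 ≤ x) (hxN : x < N) :
    1 / (x * Real.log (1 + N / x)) ≤
      4 * (Real.log (1 + Real.log (N / (x - 1))) - Real.log (1 + Real.log (N / x))) := by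
  have hx0 : (0:ℝ) < x := by linarith
  have hx1 : (0:ℝ) < x - 1 := by linarith
  have hN0 : (0:ℝ) < N := by linarith
  have hNx : 1 < N / x := (one_lt_div hx0).mpr hxN
  have hlgx : 0 < Real.log (N / x) := Real.log_pos hNx
  have hdiff : Real.log (N / (x-1)) - Real.log (N / x) = Real.log x - Real.log (x-1) := by
    rw [Real.log_div hN0.ne' hx1.ne', Real.log_div hN0.ne' hx0.ne']; ring
  have hlow : 1/x ≤ Real.log (N / (x-1)) - Real.log (N / x) := by
    have h := Real.log_le_sub_one_of_pos (show (0:ℝ) < (x-1)/x by positivity)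
    rw [Real.log_div hx1.ne' hx0.ne'] at h
    have hxx : (x-1)/x - 1 = -(1/x) := by field_simp; ring
    rw [hxx] at h
    rw [hdiff]; linarith
  have hhigh : Real.log (N / (x-1)) - Real.log (N / x) ≤ 1 := by
    have h := Real.log_le_sub_one_of_pos (show (0:ℝ) < x/(x-1) by positivity)
    rw [Real.log_div hx0.ne' hx1.ne'] at h
    have hxx : x/(x-1) - 1 = 1/(x-1) := by field_simp; ring
    rw [hxx] at h
    have h1 : 1/(x-1) ≤ 1 := by rw [div_le_one hx1]; linarith
    rw [hdiff]; linarith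
  have hx0' : (0:ℝ) < 1/x := by positivity
  have hL0pos : (0:ℝ) < 1 + Real.log (N / x) := by linarith
  have hL1pos : (0:ℝ) < 1 + Real.log (N / (x-1)) := by linarith
  have hFdiff : ((1 + Real.log (N / (x-1))) - (1 + Real.log (N / x))) / (1 + Real.log (N / (x-1)))
      ≤ Real.log (1 + Real.log (N / (x-1))) - Real.log (1 + Real.log (N / x)) := by
    have h := Real.log_le_sub_one_of_pos
      (show (0:ℝ) < (1 + Real.log (N / x))/(1 + Real.log (N / (x-1))) by positivity)
    rw [Real.log_div hL0pos.ne' hL1pos.ne'] at h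
    have hxx : (1 + Real.log (N / x))/(1 + Real.log (N / (x-1))) - 1
        = -(((1 + Real.log (N / (x-1))) - (1 + Real.log (N / x))) / (1 + Real.log (N / (x-1)))) := by
      field_simp; ring
    rw [hxx] at h
    linarith
  have hterm : (1 + Real.log (N / x))/2 ≤ Real.log (1 + N/x) := by
    have := my_two_log (N/x) (by positivity)
    linarith
  have hlogpos : 0 < Real.log (1 + N/x) := by linarith
  have h1 : 1/(x * Real.log (1+N/x)) ≤ 2/(x * (1 + Real.log (N / x))) := by
    rw [div_le_div_iff₀ (by positivity) (by positivity)]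
    nlinarith [hterm, hx0]
  have h2 : (1/x) / (2*(1 + Real.log (N / x)))
      ≤ ((1 + Real.log (N / (x-1))) - (1 + Real.log (N / x))) / (1 + Real.log (N / (x-1))) := by
    rw [div_le_div_iff₀ (by positivity) hL1pos]
    nlinarith [hlow, hhigh, hx0', hL0pos]
  have e2 : 2/(x*(1 + Real.log (N / x))) = 4 * ((1/x)/(2*(1 + Real.log (N / x)))) := by
    field_simp; ring
  calc 1/(x * Real.log (1+N/x)) ≤ 2/(x*(1 + Real.log (N / x))) := h1
    _ = 4 * ((1/x)/(2*(1 + Real.log (N / x)))) := e2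
    _ ≤ 4 * (((1 + Real.log (N / (x-1))) - (1 + Real.log (N / x))) / (1 + Real.log (N / (x-1)))) := by
        linarith
    _ ≤ 4 * (Real.log (1 + Real.log (N / (x-1))) - Real.log (1 + Real.log (N / x))) := by
        linarith

/-- the middle-phase sum for edge-MEG is `O(1 + log log (n p̂))`. -/
theorem edge_middle_sum (c : ℝ) (hc : 1 ≤ c) :
    ∃ C : ℝ, 0 < C ∧
      ∀ (n : ℕ) (phat : ℝ), 3 ≤ n → Real.exp 2 * c / n ≤ phat → phat ≤ 1 →
        ∑ i ∈ Finset.Icc (⌊1 / phat⌋₊ + 1) (⌈(n : ℝ) / c⌉₊ - 1),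
            1 / ((i : ℝ) * Real.log (1 + (n : ℝ) / (c * i))) ≤
          C * (1 + Real.log (Real.log ((n : ℝ) * phat))) := by
  refine ⟨8, by norm_num, ?_⟩
  intro n phat hn hplow hpup
  have hc0 : (0:ℝ) < c := by linarith
  have hn0 : (0:ℝ) < n := by
    have : (3:ℝ) ≤ (n:ℝ) := by exact_mod_cast hn
    linarith
  have hp0 : 0 < phat := lt_of_lt_of_le (by positivity) hplow
  have hnp : Real.exp 2 * c ≤ (n:ℝ) * phat := by
    rw [div_le_iff₀ hn0] at hplow; linarith [hplow]
  have hexp2 : (3:ℝ) ≤ Real.exp 2 := by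
    have := Real.add_one_le_exp (2:ℝ); linarith
  have hL2 : 2 ≤ Real.log ((n:ℝ) * phat) := by
    have h1 : Real.exp 2 ≤ (n:ℝ) * phat := by nlinarith [Real.exp_pos (2:ℝ)]
    calc (2:ℝ) = Real.log (Real.exp 2) := (Real.log_exp 2).symm
      _ ≤ Real.log ((n:ℝ)*phat) := Real.log_le_log (Real.exp_pos 2) h1
  have hlog2 : Real.log 2 ≤ 1 := by
    have := Real.log_two_lt_d9; linarith
  have hlogL : 0 < Real.log (Real.log ((n:ℝ) * phat)) := Real.log_pos (by linarith)
  set N : ℝ := (n:ℝ)/c with hNdef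
  set a : ℕ := ⌊1/phat⌋₊ with hadef
  have ha1 : 1 ≤ a := Nat.le_floor (by
    rw [Nat.cast_one, le_div_iff₀ hp0]; linarith)
  have ha0 : (0:ℝ) < a := by exact_mod_cast Nat.lt_of_lt_of_le Nat.zero_lt_one ha1
  have haN : (a:ℝ) < N := by
    have h1 : (a:ℝ) ≤ 1/phat := Nat.floor_le (by positivity)
    have h2 : 1/phat ≤ (n:ℝ)/(Real.exp 2 * c) := by
      rw [div_le_div_iff₀ hp0 (by positivity)]
      nlinarith [hnp]
    have h3 : (n:ℝ)/(Real.exp 2 * c) < N := by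
      rw [hNdef]
      apply div_lt_div_of_pos_left hn0 hc0
      nlinarith
    linarith
  have hNa1 : 1 ≤ N / (a:ℝ) := (one_le_div ha0).mpr haN.le
  have haHalf : 1/(2*phat) ≤ (a:ℝ) := by
    rcases le_or_gt (1/phat) 2 with h | h
    · have h1 : 1/(2*phat) ≤ 1 := by
        rw [div_le_one (by positivity)]
        rw [div_le_iff₀ hp0] at h
        linarith
      have h2 : (1:ℝ) ≤ (a:ℝ) := by exact_mod_cast ha1
      linarith
    · have h2 : 1/phat - 1 ≤ (a:ℝ) := le_of_lt (Nat.sub_one_lt_floor (1/phat))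
      have e : 1/(2*phat) = (1/phat)/2 := by ring
      rw [e]; linarith
  have hNa : N / (a:ℝ) ≤ 2 * ((n:ℝ) * phat) := by
    rw [div_le_iff₀ ha0, hNdef]
    have h1 : (n:ℝ)/c ≤ n := by rw [div_le_iff₀ hc0]; nlinarith
    have h2 : (n:ℝ) ≤ 2*((n:ℝ)*phat)*(a:ℝ) := by
      have h3 := mul_le_mul_of_nonneg_left haHalf (show (0:ℝ) ≤ 2*((n:ℝ)*phat) by positivity)
      have e : 2*((n:ℝ)*phat) * (1/(2*phat)) = n := by field_simp
      rw [e] at h3; linarith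
    linarith
  set F : ℕ → ℝ := fun j => Real.log (1 + Real.log (N / (j:ℝ))) with hFdef
  have hFa : F a ≤ 2 * Real.log (Real.log ((n:ℝ) * phat)) := by
    have hlogNa : 0 ≤ Real.log (N/(a:ℝ)) := Real.log_nonneg hNa1
    have h1 : Real.log (N/(a:ℝ)) ≤ Real.log 2 + Real.log ((n:ℝ)*phat) := by
      rw [← Real.log_mul (by norm_num) (by positivity)]
      exact Real.log_le_log (by positivity) hNa
    have h2 : 1 + Real.log (N/(a:ℝ)) ≤ (Real.log ((n:ℝ)*phat))^2 := by
      nlinarith [hL2, hlog2]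
    calc F a ≤ Real.log ((Real.log ((n:ℝ)*phat))^2) :=
          Real.log_le_log (by linarith) h2
      _ = 2 * Real.log (Real.log ((n:ℝ)*phat)) := by rw [Real.log_pow]; push_cast; ring
  rcases lt_or_ge (⌈N⌉₊ - 1) (a + 1) with hes | hse
  · rw [Finset.Icc_eq_empty (by omega)]
    simp only [Finset.sum_empty]
    nlinarith [hlogL]
  · have hsum : ∀ i ∈ Finset.Icc (a+1) (⌈N⌉₊ - 1),
        1 / ((i : ℝ) * Real.log (1 + (n : ℝ) / (c * i))) ≤ 4 * (F (i-1) - F i) := by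
      intro i hi
      rw [Finset.mem_Icc] at hi
      have hi2 : 2 ≤ i := by omega
      have hiN : (i:ℝ) < N := by
        have h1 : i < ⌈N⌉₊ := by omega
        exact Nat.lt_ceil.mp h1
      have hcast : ((i-1:ℕ):ℝ) = (i:ℝ) - 1 := by
        rw [Nat.cast_sub (by omega : 1 ≤ i), Nat.cast_one]
      have e1 : (n:ℝ)/(c * i) = N / (i:ℝ) := by rw [hNdef, div_div]
      rw [e1, hFdef]
      simp only [hcast]
      exact my_key N (i:ℝ) (by exact_mod_cast hi2) hiN
    have hFE : 0 ≤ F (⌈N⌉₊ - 1) := by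
      have hE2 : 2 ≤ ⌈N⌉₊ - 1 := by omega
      have hEN : ((⌈N⌉₊ - 1 : ℕ):ℝ) < N := by
        have h1 : ⌈N⌉₊ - 1 < ⌈N⌉₊ := by omega
        exact Nat.lt_ceil.mp h1
      have hE0 : (0:ℝ) < ((⌈N⌉₊ - 1 : ℕ):ℝ) := by
        exact_mod_cast Nat.lt_of_lt_of_le Nat.zero_lt_two hE2
      have : 1 ≤ N / ((⌈N⌉₊ - 1 : ℕ):ℝ) := (one_le_div hE0).mpr hEN.le
      have := Real.log_nonneg this
      exact Real.log_nonneg (by linarith)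
    calc ∑ i ∈ Finset.Icc (a + 1) (⌈(n : ℝ) / c⌉₊ - 1),
            1 / ((i : ℝ) * Real.log (1 + (n : ℝ) / (c * i)))
        ≤ ∑ i ∈ Finset.Icc (a + 1) (⌈(n : ℝ) / c⌉₊ - 1), 4 * (F (i-1) - F i) :=
          Finset.sum_le_sum hsum
      _ = 4 * ∑ i ∈ Finset.Icc (a + 1) (⌈(n : ℝ) / c⌉₊ - 1), (F (i-1) - F i) := by
          rw [Finset.mul_sum]
      _ = 4 * (F ((a+1)-1) - F (⌈N⌉₊ - 1)) := by
          rw [my_telescope F (a+1) _ hse]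
      _ = 4 * (F a - F (⌈N⌉₊ - 1)) := by norm_num
      _ ≤ 4 * F a := by linarith
      _ ≤ 8 * Real.log (Real.log ((n:ℝ)*phat)) := by linarith
      _ ≤ 8 * (1 + Real.log (Real.log ((n:ℝ)*phat))) := by linarith

end
end
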